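/- Let A be a weighted geometric mean closed Archimedean Φ-algebra and let p, q ∈ (0,∞). Then for every a ∈ A⁺, a^p · a^q = a^{p+q}, where all real powers are defined via the infimum formula. -/

import Mathlib

/-- The set whose infimum gives the fractional part of the real power `a^r` in a
`Φ`-algebra with unit `1`: with `r̃ = r - ⌊r⌋`, this is
`{ r̃·θ₁·a + (1-r̃)·θ₂·e : θ₁, θ₂ ∈ (0,∞), θ₁^{r̃}·θ₂^{1-r̃} = 1 }`. -/
def rpowSet {A : Type*} [CommRing A] [Lattice A] [Module ℝ A]
    (a : A) (r : ℝ) : Set A :=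
  {x | ∃ θ₁ θ₂ : ℝ, 0 < θ₁ ∧ 0 < θ₂ ∧
      θ₁ ^ (r - (⌊r⌋₊ : ℝ)) * θ₂ ^ (1 - (r - (⌊r⌋₊ : ℝ))) = 1 ∧
      x = ((r - (⌊r⌋₊ : ℝ)) * θ₁) • a + ((1 - (r - (⌊r⌋₊ : ℝ))) * θ₂) • (1 : A)}

/-- `IsRPow a r b` says that `b = a^r` in the sense of Definition 4.3:
`a^r = a^{⌊r⌋} · inf (rpowSet a r)` (with `a^{⌊r⌋} = e` when `⌊r⌋ = 0`). -/
def IsRPow {A : Type*} [CommRing A] [Lattice A] [Module ℝ A]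
    (a : A) (r : ℝ) (b : A) : Prop :=
  ∃ c : A, IsGLB (rpowSet a r) c ∧ b = a ^ ⌊r⌋₊ * c


namespace Stmt15Aux

section Main

variable {A : Type*} [CommRing A] [Lattice A]
    [CovariantClass A A (· + ·) (· ≤ ·)]
    [Algebra ℝ A] [PosSMulMono ℝ A]

set_option linter.unusedSectionVars false
set_option linter.unusedVariables false
set_option maxHeartbeats 1000000

theorem disj_mul_zero
    (hfalg : ∀ a b c : A, a ⊓ b = 0 → 0 ≤ c → (c * a) ⊓ b = 0)
    {x y : A} (hxy : x ⊓ y = 0) (hx : 0 ≤ x) (hy : 0 ≤ y) :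
    x * y = 0 := by
  have h1 : (y * x) ⊓ y = 0 := hfalg x y y hxy hy
  have h2 : y ⊓ (y * x) = 0 := by rwa [inf_comm] at h1
  have h3 : (x * y) ⊓ (y * x) = 0 := hfalg y (y * x) x h2 hx
  rw [mul_comm y x, inf_idem] at h3
  rw [mul_comm x y] at h3 ⊢
  exact h3

theorem pp_mul_np_zero
    (hfalg : ∀ a b c : A, a ⊓ b = 0 → 0 ≤ c → (c * a) ⊓ b = 0)
    (x : A) : x⁺ * x⁻ = 0 :=
  disj_mul_zero hfalg (posPart_inf_negPart_eq_zero x) (posPart_nonneg x) (negPart_nonneg x)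

theorem sq_nonneg'
    (hmulpos : ∀ a b : A, 0 ≤ a → 0 ≤ b → 0 ≤ a * b)
    (hfalg : ∀ a b c : A, a ⊓ b = 0 → 0 ≤ c → (c * a) ⊓ b = 0)
    (x : A) : 0 ≤ x * x := by
  have h1 : x⁺ * x⁻ = 0 := pp_mul_np_zero hfalg x
  have h2 : x⁻ * x⁺ = 0 := by rw [mul_comm]; exact h1
  have h3 : x * x = x⁺ * x⁺ + x⁻ * x⁻ := by
    calc x * x = (x⁺ - x⁻) * (x⁺ - x⁻) := by rw [posPart_sub_negPart]
    _ = x⁺ * x⁺ + x⁻ * x⁻ - (x⁺ * x⁻ + x⁻ * x⁺) := by ring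
    _ = x⁺ * x⁺ + x⁻ * x⁻ := by rw [h1, h2]; ring
  rw [h3]
  exact add_nonneg (hmulpos _ _ (posPart_nonneg x) (posPart_nonneg x))
    (hmulpos _ _ (negPart_nonneg x) (negPart_nonneg x))

theorem one_nonneg'
    (hmulpos : ∀ a b : A, 0 ≤ a → 0 ≤ b → 0 ≤ a * b)
    (hfalg : ∀ a b c : A, a ⊓ b = 0 → 0 ≤ c → (c * a) ⊓ b = 0) : (0 : A) ≤ 1 := by
  simpa using sq_nonneg' hmulpos hfalg (1 : A)

theorem pow_nonneg'
    (hmulpos : ∀ a b : A, 0 ≤ a → 0 ≤ b → 0 ≤ a * b)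
    (hfalg : ∀ a b c : A, a ⊓ b = 0 → 0 ≤ c → (c * a) ⊓ b = 0)
    {a : A} (ha : 0 ≤ a) : ∀ n : ℕ, 0 ≤ a ^ n
  | 0 => by simpa using one_nonneg' hmulpos hfalg
  | n + 1 => by
      rw [pow_succ]
      exact hmulpos _ _ (pow_nonneg' hmulpos hfalg ha n) ha

theorem mul_le_mul4
    (hmulpos : ∀ a b : A, 0 ≤ a → 0 ≤ b → 0 ≤ a * b)
    {x y u v : A} (hx : 0 ≤ x) (hy : 0 ≤ y) (hxu : x ≤ u) (hyv : y ≤ v) :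
    x * y ≤ u * v := by
  have h1 : 0 ≤ u * (v - y) := hmulpos _ _ (hx.trans hxu) (sub_nonneg.2 hyv)
  have h2 : 0 ≤ (u - x) * y := hmulpos _ _ (sub_nonneg.2 hxu) hy
  have h3 : u * v - x * y = u * (v - y) + (u - x) * y := by ring
  have h4 := add_nonneg h1 h2
  rw [← h3] at h4
  exact sub_nonneg.1 h4

theorem mul_inf_of_nonneg
    (hfalg : ∀ a b c : A, a ⊓ b = 0 → 0 ≤ c → (c * a) ⊓ b = 0)
    {c : A} (hc : 0 ≤ c) (x y : A) :
    c * (x ⊓ y) = (c * x) ⊓ (c * y) := by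
  have h0 : (x - x ⊓ y) ⊓ (y - x ⊓ y) = 0 := by
    rw [sub_eq_add_neg, sub_eq_add_neg, ← inf_add, add_neg_cancel]
  have h1 := hfalg _ _ c h0 hc
  have h2 : (y - x ⊓ y) ⊓ (c * (x - x ⊓ y)) = 0 := by rwa [inf_comm] at h1
  have h3 := hfalg _ _ c h2 hc
  rw [mul_sub, mul_sub] at h3
  have h4 : (c * x - c * (x ⊓ y)) ⊓ (c * y - c * (x ⊓ y)) = (c * x) ⊓ (c * y) - c * (x ⊓ y) := by
    rw [sub_eq_add_neg, sub_eq_add_neg, ← inf_add, ← sub_eq_add_neg]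
  rw [inf_comm] at h3
  rw [h3] at h4
  exact (sub_eq_zero.1 h4.symm).symm

theorem inf_add_le' {u x y : A} (hu : 0 ≤ u) (hx : 0 ≤ x) (hy : 0 ≤ y) :
    u ⊓ (x + y) ≤ u ⊓ x + u ⊓ y := by
  set s := u ⊓ (x + y) with hs
  have h1 : s - u ⊓ x = (s - u) ⊔ (s - x) := by
    rw [sub_eq_add_neg, neg_inf, add_sup, ← sub_eq_add_neg, ← sub_eq_add_neg]
  have h2 : s - u ≤ u ⊓ y := by
    have h : s - u ≤ 0 := sub_nonpos.2 inf_le_left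
    exact h.trans (le_inf hu hy)
  have h3 : s - x ≤ u ⊓ y := by
    refine le_inf ?_ ?_
    · have h : s ≤ u + x := inf_le_left.trans (le_add_of_nonneg_right hx)
      exact sub_le_iff_le_add.2 h
    · have h : s ≤ x + y := inf_le_right
      exact sub_le_iff_le_add.2 (by rwa [add_comm] at h)
  have h4 : s - u ⊓ x ≤ u ⊓ y := by rw [h1]; exact sup_le h2 h3
  have h5 := sub_le_iff_le_add.1 h4
  rwa [add_comm] at h5

theorem posPart_eq_sub_inf' (x y : A) : (x - y)⁺ = x - x ⊓ y := by
  have h1 : (x - y)⁺ + y = x ⊔ y := by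
    rw [posPart_def, sup_add, zero_add, sub_add_cancel]
  have h2 : x ⊓ y + (x ⊔ y) = x + y := inf_add_sup x y
  have h3 : (x - y)⁺ = x ⊔ y - y := by rw [← h1]; ring
  rw [h3]
  have h4 : x ⊔ y = x + y - x ⊓ y := by rw [← h2]; ring
  rw [h4]; ring

theorem disj_prod_zero
    (hmulpos : ∀ a b : A, 0 ≤ a → 0 ≤ b → 0 ≤ a * b)
    (hfalg : ∀ a b c : A, a ⊓ b = 0 → 0 ≤ c → (c * a) ⊓ b = 0)
    {x y c d : A} (hxy : x ⊓ y = 0) (hc : 0 ≤ c) (hd : 0 ≤ d) :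
    (c * x) ⊓ (d * y) = 0 := by
  have h1 := hfalg x y c hxy hc
  have h2 : y ⊓ (c * x) = 0 := by rwa [inf_comm] at h1
  have h3 := hfalg y (c * x) d h2 hd
  rwa [inf_comm] at h3

theorem rpow_bound {V c e : ℝ} (hV : 0 < V) (he : 0 < e) (hc : 0 < c)
    (h : c^(e⁻¹) ≤ V) : c ≤ V^e := by
  have h1 : (c^(e⁻¹))^e ≤ V^e := Real.rpow_le_rpow (Real.rpow_nonneg hc.le _) h he.le
  rwa [← Real.rpow_mul hc.le, inv_mul_cancel₀ (ne_of_gt he), Real.rpow_one] at h1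

theorem Vcond_lt1 {s t z₁ z₀ : ℝ} (hs : 0 < s) (hs1 : s < 1) (ht : 0 < t) (ht1 : t < 1)
    (hst1 : s + t < 1) (hz1 : 0 < z₁) (hz0 : 0 ≤ z₀) :
    ∀ ε : ℝ, 0 < ε → ∃ V : ℝ, 1 ≤ V ∧ s*t*V^(s+t-2) ≤ ε ∧
      (s+t-2*(s*t))*V^(s+t-1) ≤ z₁ ∧ (1-s*t)*V^(s+t) ≤ z₁*V + z₀ + ε := by
  intro ε hε
  have hst : 0 < s*t := mul_pos hs ht
  have h2σ : 0 < 2 - (s+t) := by linarith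
  have h1σ : 0 < 1 - (s+t) := by linarith
  refine ⟨max 1 (max ((s*t/ε)^((2-(s+t))⁻¹))
    (max (((s+t)/z₁)^((1-(s+t))⁻¹)) (((1-s*t)/z₁)^((1-(s+t))⁻¹)))), le_max_left _ _, ?_, ?_, ?_⟩
  all_goals
    set V : ℝ := max 1 (max ((s*t/ε)^((2-(s+t))⁻¹))
      (max (((s+t)/z₁)^((1-(s+t))⁻¹)) (((1-s*t)/z₁)^((1-(s+t))⁻¹)))) with hVdef
  all_goals have hVpos : 0 < V := lt_of_lt_of_le one_pos (le_max_left _ _)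
  · -- (b)
    have hb : s*t/ε ≤ V^(2-(s+t)) := by
      refine rpow_bound hVpos h2σ (by positivity) ?_
      exact le_max_of_le_right (le_max_left _ _)
    have hx : V^(s+t-2) = (V^(2-(s+t)))⁻¹ := by
      rw [show s+t-2 = -(2-(s+t)) by ring, Real.rpow_neg hVpos.le]
    have h2 : (V^(2-(s+t)))⁻¹ ≤ (s*t/ε)⁻¹ := by
      apply inv_anti₀ (by positivity) hb
    have h3 : (s*t/ε)⁻¹ = ε/(s*t) := by rw [inv_div]
    have h4 : s*t*(ε/(s*t)) = ε := by field_simp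
    calc s*t*V^(s+t-2) = s*t*(V^(2-(s+t)))⁻¹ := by rw [hx]
      _ ≤ s*t*(ε/(s*t)) := by
          rw [← h3]
          exact mul_le_mul_of_nonneg_left h2 hst.le
      _ = ε := h4
  · -- (c)
    rcases le_or_gt (s+t-2*(s*t)) 0 with hc | hc
    · have := Real.rpow_pos_of_pos hVpos (s+t-1)
      nlinarith
    · have hb : (s+t)/z₁ ≤ V^(1-(s+t)) := by
        refine rpow_bound hVpos h1σ (by positivity) ?_
        exact le_max_of_le_right (le_max_of_le_right (le_max_left _ _))
      have hx : V^(s+t-1) = (V^(1-(s+t)))⁻¹ := by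
        rw [show s+t-1 = -(1-(s+t)) by ring, Real.rpow_neg hVpos.le]
      have h2 : (V^(1-(s+t)))⁻¹ ≤ ((s+t)/z₁)⁻¹ := by
        apply inv_anti₀ (by positivity) hb
      have h3 : ((s+t)/z₁)⁻¹ = z₁/(s+t) := by rw [inv_div]
      have h4 : V^(s+t-1) ≤ z₁/(s+t) := by rw [hx, ← h3]; exact h2
      have h5 : 0 < V^(s+t-1) := Real.rpow_pos_of_pos hVpos _
      have h6 : (s+t-2*(s*t)) ≤ s+t := by nlinarith
      have h7 : (s+t)*(z₁/(s+t)) = z₁ := by field_simp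
      nlinarith [mul_le_mul_of_nonneg_left h4 (by linarith : (0:ℝ) ≤ s+t)]
  · -- (d)
    have hb : (1-s*t)/z₁ ≤ V^(1-(s+t)) := by
      have h1st : 0 < 1 - s*t := by nlinarith
      refine rpow_bound hVpos h1σ (by positivity) ?_
      exact le_max_of_le_right (le_max_of_le_right (le_max_right _ _))
    have hVs : V^(1-(s+t))*V^(s+t) = V := by
      rw [← Real.rpow_add hVpos]
      norm_num
    have h5 : 0 < V^(s+t) := Real.rpow_pos_of_pos hVpos _
    have h6 : (1-s*t) ≤ z₁*V^(1-(s+t)) := by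
      have := mul_le_mul_of_nonneg_left hb hz1.le
      calc 1-s*t = z₁*((1-s*t)/z₁) := by field_simp
        _ ≤ z₁*V^(1-(s+t)) := this
    calc (1-s*t)*V^(s+t) ≤ (z₁*V^(1-(s+t)))*V^(s+t) :=
          mul_le_mul_of_nonneg_right h6 h5.le
      _ = z₁*(V^(1-(s+t))*V^(s+t)) := by ring
      _ = z₁*V := by rw [hVs]
      _ ≤ z₁*V + z₀ + ε := by linarith

theorem Vcond_eq1 {t z₀ : ℝ} (ht : 0 < t) (ht1 : t < 1) (hz0 : 0 ≤ z₀) :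
    ∀ ε : ℝ, 0 < ε → ∃ V : ℝ, 1 ≤ V ∧ t*(1-t)*V^(t+(1-t)-2) ≤ ε ∧
      (t+(1-t)-2*(t*(1-t)))*V^(t+(1-t)-1) ≤ 1 ∧
      (1-t*(1-t))*V^(t+(1-t)) ≤ 1*V + z₀ + ε := by
  intro ε hε
  have ht' : 0 < t*(1-t) := mul_pos ht (by linarith)
  refine ⟨max 1 (t*(1-t)/ε), le_max_left _ _, ?_, ?_, ?_⟩
  all_goals have hVpos : (0:ℝ) < max 1 (t*(1-t)/ε) := lt_of_lt_of_le one_pos (le_max_left _ _)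
  · have he : t+(1-t)-2 = -1 := by ring
    rw [he, Real.rpow_neg_one]
    have h1 : t*(1-t)/ε ≤ max 1 (t*(1-t)/ε) := le_max_right _ _
    have h2 : (max 1 (t*(1-t)/ε))⁻¹ ≤ (t*(1-t)/ε)⁻¹ := by
      apply inv_anti₀ (by positivity) h1
    have h3 : (t*(1-t)/ε)⁻¹ = ε/(t*(1-t)) := by rw [inv_div]
    have h4 : t*(1-t)*(ε/(t*(1-t))) = ε := by field_simp; exact div_self (ne_of_gt (by linarith))
    calc t*(1-t)*(max 1 (t*(1-t)/ε))⁻¹ ≤ t*(1-t)*(ε/(t*(1-t))) := by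
          rw [← h3]
          exact mul_le_mul_of_nonneg_left h2 ht'.le
      _ = ε := h4
  · have he : t+(1-t)-1 = 0 := by ring
    rw [he, Real.rpow_zero]
    nlinarith
  · have he : t+(1-t) = 1 := by ring
    rw [he, Real.rpow_one]
    nlinarith [mul_nonneg ht'.le hVpos.le, hε.le]

theorem exists_tangent {α β w : ℝ} (hα : 0 < α) (hβ : 0 < β) (hw : 0 < w) (hw1 : w < 1) :
    ∃ c : ℝ, 0 < c ∧ 2*α*c + β = w*c^(w-1) := by
  have h1w : 0 < 1 - w := by linarith
  set lo : ℝ := min 1 ((w/(2*α+β+1))^((1-w)⁻¹)) with hlo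
  set hi : ℝ := max 1 (w/(2*α)) with hhi
  have hlopos : 0 < lo := lt_min one_pos (Real.rpow_pos_of_pos (by positivity) _)
  have hlo1 : lo ≤ 1 := min_le_left _ _
  have hhi1 : (1:ℝ) ≤ hi := le_max_left _ _
  have hlohi : lo ≤ hi := hlo1.trans hhi1
  set f : ℝ → ℝ := fun c => 2*α*c + β - w*c^(w-1) with hf
  have hcont : ContinuousOn f (Set.Icc lo hi) := by
    apply ContinuousOn.sub
    · fun_prop
    · apply ContinuousOn.mul continuousOn_const
      intro c hc
      have hcpos : 0 < c := lt_of_lt_of_le hlopos hc.1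
      exact (Real.continuousAt_rpow_const c (w-1) (Or.inl (ne_of_gt hcpos))).continuousWithinAt
  have hflo : f lo ≤ 0 := by
    have hcand : (0:ℝ) < w/(2*α+β+1) := by positivity
    have h2 : lo^(1-w) ≤ w/(2*α+β+1) := by
      have h3 : lo ≤ (w/(2*α+β+1))^((1-w)⁻¹) := min_le_right _ _
      have h4 : lo^(1-w) ≤ ((w/(2*α+β+1))^((1-w)⁻¹))^(1-w) :=
        Real.rpow_le_rpow hlopos.le h3 h1w.le
      rwa [← Real.rpow_mul hcand.le, inv_mul_cancel₀ (ne_of_gt h1w), Real.rpow_one] at h4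
    have h3 : 0 < lo^(1-w) := Real.rpow_pos_of_pos hlopos _
    have h5 : lo^(w-1) = (lo^(1-w))⁻¹ := by
      rw [show w-1 = -(1-w) by ring, Real.rpow_neg hlopos.le]
    have h6 : (w/(2*α+β+1))⁻¹ ≤ (lo^(1-w))⁻¹ := inv_anti₀ h3 h2
    have h7 : (w/(2*α+β+1))⁻¹ = (2*α+β+1)/w := by rw [inv_div]
    have h8 : 2*α+β+1 ≤ w*lo^(w-1) := by
      rw [h5]
      have h9 : w*((2*α+β+1)/w) = 2*α+β+1 := by field_simp
      calc 2*α+β+1 = w*((2*α+β+1)/w) := h9.symm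
        _ ≤ w*(lo^(1-w))⁻¹ := by
            rw [← h7]
            exact mul_le_mul_of_nonneg_left h6 hw.le
    have h10 : 2*α*lo ≤ 2*α := by nlinarith
    rw [hf]
    simp only
    linarith
  have hfhi : 0 ≤ f hi := by
    have h2 : hi^(w-1) ≤ 1 :=
      Real.rpow_le_one_of_one_le_of_nonpos hhi1 (by linarith)
    have h3 : w/(2*α) ≤ hi := le_max_right _ _
    have h4 : w ≤ 2*α*hi := by
      have h5 : 2*α*(w/(2*α)) = w := by field_simp
      calc w = 2*α*(w/(2*α)) := h5.symm
        _ ≤ 2*α*hi := by nlinarith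
    have h6 : w*hi^(w-1) ≤ w := by nlinarith
    rw [hf]
    simp only
    linarith
  have h0mem : (0:ℝ) ∈ Set.Icc (f lo) (f hi) := ⟨hflo, hfhi⟩
  obtain ⟨c, hcmem, hfc⟩ := intermediate_value_Icc hlohi hcont h0mem
  refine ⟨c, lt_of_lt_of_le hlopos hcmem.1, ?_⟩
  rw [hf] at hfc
  simp only at hfc
  linarith


/-- generic weighted-geometric-mean set for exponent `ρ` -/
def gset {A : Type*} [CommRing A] [Lattice A] [Module ℝ A] (a : A) (ρ : ℝ) : Set A :=
  {x | ∃ θ₁ θ₂ : ℝ, 0 < θ₁ ∧ 0 < θ₂ ∧ θ₁ ^ ρ * θ₂ ^ (1 - ρ) = 1 ∧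
      x = (ρ * θ₁) • a + ((1 - ρ) * θ₂) • (1 : A)}

theorem rpowSet_eq_gset {A : Type*} [CommRing A] [Lattice A] [Module ℝ A] (a : A) (r : ℝ) :
    rpowSet a r = gset a (r - (⌊r⌋₊ : ℝ)) := rfl

/-- scalar: the lines in `gset` dominate `u^ρ` pointwise -/
theorem tangent_line_ge {ρ θ₁ θ₂ : ℝ} (hρ0 : 0 < ρ) (hρ1 : ρ ≤ 1) (h1 : 0 < θ₁) (h2 : 0 < θ₂)
    (hc : θ₁ ^ ρ * θ₂ ^ (1 - ρ) = 1) {u : ℝ} (hu : 0 ≤ u) :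
    u ^ ρ ≤ ρ * θ₁ * u + (1 - ρ) * θ₂ := by
  have h := Real.geom_mean_le_arith_mean2_weighted (w₁ := ρ) (w₂ := 1-ρ) (p₁ := θ₁*u)
    (p₂ := θ₂) hρ0.le (by linarith) (mul_nonneg h1.le hu) h2.le (by ring)
  have e : (θ₁ * u) ^ ρ * θ₂ ^ (1 - ρ) = u ^ ρ := by
    rw [Real.mul_rpow h1.le hu]
    calc θ₁ ^ ρ * u ^ ρ * θ₂ ^ (1 - ρ) = u ^ ρ * (θ₁ ^ ρ * θ₂ ^ (1 - ρ)) := by ring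
      _ = u ^ ρ := by rw [hc, mul_one]
  rw [e] at h
  calc u ^ ρ ≤ ρ * (θ₁ * u) + (1 - ρ) * θ₂ := h
    _ = ρ * θ₁ * u + (1 - ρ) * θ₂ := by ring

theorem tangent_constraint {ρ v : ℝ} (hv : 0 < v) :
    (v ^ (ρ - 1)) ^ ρ * (v ^ ρ) ^ (1 - ρ) = 1 := by
  rw [← Real.rpow_mul hv.le, ← Real.rpow_mul hv.le, ← Real.rpow_add hv,
    show (ρ-1)*ρ + ρ*(1-ρ) = 0 by ring, Real.rpow_zero]


theorem mem_gset_pair (a : A) (ρ : ℝ) {θ₁ θ₂ : ℝ} (h1 : 0 < θ₁) (h2 : 0 < θ₂)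
    (hc : θ₁ ^ ρ * θ₂ ^ (1 - ρ) = 1) :
    (ρ * θ₁) • a + ((1 - ρ) * θ₂) • (1 : A) ∈ gset a ρ :=
  ⟨θ₁, θ₂, h1, h2, hc, rfl⟩

theorem mem_gset_tangent (a : A) {ρ v : ℝ} (hv : 0 < v) :
    (ρ * v ^ (ρ - 1)) • a + ((1 - ρ) * v ^ ρ) • (1 : A) ∈ gset a ρ :=
  mem_gset_pair a ρ (Real.rpow_pos_of_pos hv _) (Real.rpow_pos_of_pos hv _)
    (tangent_constraint hv)

theorem gset_nonempty (a : A) (ρ : ℝ) : (gset a ρ).Nonempty :=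
  ⟨_, mem_gset_pair a ρ one_pos one_pos (by simp)⟩

theorem gset_mem_nonneg
    (hone : (0:A) ≤ 1)
    {a : A} (ha : 0 ≤ a) {ρ : ℝ} (hρ0 : 0 ≤ ρ) (hρ1 : ρ ≤ 1)
    {x : A} (hx : x ∈ gset a ρ) : 0 ≤ x := by
  obtain ⟨θ₁, θ₂, h1, h2, _, rfl⟩ := hx
  exact add_nonneg (smul_nonneg (mul_nonneg hρ0 h1.le) ha)
    (smul_nonneg (mul_nonneg (by linarith) h2.le) hone)

theorem glb_gset_nonneg
    (hone : (0:A) ≤ 1)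
    {a : A} (ha : 0 ≤ a) {ρ : ℝ} (hρ0 : 0 ≤ ρ) (hρ1 : ρ ≤ 1)
    {m : A} (hm : IsGLB (gset a ρ) m) : 0 ≤ m :=
  hm.2 (fun _ hx => gset_mem_nonneg hone ha hρ0 hρ1 hx)

theorem gset_zero (a : A) : gset a 0 = {(1:A)} := by
  ext x
  constructor
  · rintro ⟨θ₁, θ₂, h1, h2, hc, rfl⟩
    rw [Real.rpow_zero, one_mul, sub_zero, Real.rpow_one] at hc
    simp [hc]
  · rintro rfl
    exact ⟨1, 1, one_pos, one_pos, by simp, by simp⟩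

theorem elt_mul_elt (a : A) (s t θ₁ θ₂ η₁ η₂ : ℝ) :
    ((s*θ₁) • a + ((1-s)*θ₂) • (1:A)) * ((t*η₁) • a + ((1-t)*η₂) • (1:A))
      = (s*θ₁*(t*η₁)) • (a*a) + (s*θ₁*((1-t)*η₂) + (1-s)*θ₂*(t*η₁)) • a
        + ((1-s)*θ₂*((1-t)*η₂)) • (1:A) := by
  simp only [mul_add, add_mul, smul_mul_assoc, mul_smul_comm, smul_smul, mul_one, one_mul]
  module

theorem diag_c2 {s t v : ℝ} (hv : 0 < v) :
    s * v ^ (s-1) * (t * v ^ (t-1)) = s*t*v^(s+t-2) := by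
  rw [show s+t-2 = (s-1)+(t-1) by ring, Real.rpow_add hv]; ring

theorem diag_c1 {s t v : ℝ} (hv : 0 < v) :
    s * v^(s-1) * ((1-t) * v^t) + (1-s) * v^s * (t * v^(t-1))
      = (s+t-2*(s*t)) * v^(s+t-1) := by
  have e1 : v^(s-1) * v^t = v^(s+t-1) := by
    rw [← Real.rpow_add hv]; ring_nf
  have e2 : v^s * v^(t-1) = v^(s+t-1) := by
    rw [← Real.rpow_add hv]; ring_nf
  calc s * v^(s-1) * ((1-t) * v^t) + (1-s) * v^s * (t * v^(t-1))
      = s*(1-t)*(v^(s-1)*v^t) + (1-s)*t*(v^s*v^(t-1)) := by ring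
    _ = s*(1-t)*v^(s+t-1) + (1-s)*t*v^(s+t-1) := by rw [e1, e2]
    _ = (s+t-2*(s*t)) * v^(s+t-1) := by ring

theorem diag_c0 {s t v : ℝ} (hv : 0 < v) :
    (1-s) * v^s * ((1-t) * v^t) = (1-s)*(1-t)*v^(s+t) := by
  calc (1-s) * v^s * ((1-t) * v^t) = (1-s)*(1-t)*(v^s*v^t) := by ring
    _ = (1-s)*(1-t)*v^(s+t) := by rw [← Real.rpow_add hv]

theorem pv_sum {s t v : ℝ} (hv : 0 < v) :
    s*t*v^(s+t-2)*v^2 + (s+t-2*(s*t))*v^(s+t-1)*v + (1-s)*(1-t)*v^(s+t) = v^(s+t) := by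
  have e1 : v^(s+t-2)*v^2 = v^(s+t) := by
    have h := (Real.rpow_add hv (s+t-2) 2).symm
    have h2 : v^(2:ℝ) = v^(2:ℕ) := by
      rw [show (2:ℝ) = ((2:ℕ):ℝ) by norm_num, Real.rpow_natCast]
    rw [h2] at h
    rw [h, show s+t-2+2 = s+t by ring]
  have e2 : v^(s+t-1)*v = v^(s+t) := by
    have h := (Real.rpow_add hv (s+t-1) 1).symm
    rw [Real.rpow_one] at h
    rw [h, show s+t-1+1 = s+t by ring]
  calc s*t*v^(s+t-2)*v^2 + (s+t-2*(s*t))*v^(s+t-1)*v + (1-s)*(1-t)*v^(s+t)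
      = s*t*(v^(s+t-2)*v^2) + (s+t-2*(s*t))*(v^(s+t-1)*v) + (1-s)*(1-t)*v^(s+t) := by ring
    _ = s*t*v^(s+t) + (s+t-2*(s*t))*v^(s+t) + (1-s)*(1-t)*v^(s+t) := by rw [e1, e2]
    _ = v^(s+t) := by ring


/-- one-sided order continuity of multiplication over a GLB -/

theorem glb_mul
    (hmulpos : ∀ a b : A, 0 ≤ a → 0 ≤ b → 0 ≤ a * b)
    (hfalg : ∀ a b c : A, a ⊓ b = 0 → 0 ≤ c → (c * a) ⊓ b = 0)
    (harch : ∀ f g : A, (∀ n : ℕ, (n : ℝ) • f ≤ g) → f ≤ 0) {S : Set A} {m c y : A} (hglb : IsGLB S m) (hne : S.Nonempty)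
    (hc : 0 ≤ c) (hy : ∀ x ∈ S, y ≤ c * x) : y ≤ c * m := by
  obtain ⟨x₀, hx₀⟩ := hne
  have hmx₀ : m ≤ x₀ := hglb.1 hx₀
  have hz₀0 : 0 ≤ x₀ - m := sub_nonneg.2 hmx₀
  have key : ∀ n : ℕ, 0 < n → y - c*m ≤ (c - (n:ℝ)•(1:A))⁺ * (x₀ - m) := by
    intro n hn
    set K := (c - (n:ℝ)•(1:A))⁺ * (x₀ - m) with hK
    have hnR : (0:ℝ) < (n:ℝ) := by exact_mod_cast hn
    have hlb : m + ((n:ℝ)⁻¹) • (y - c*m - K) ∈ lowerBounds S := by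
      intro x hx
      have h1 : y ≤ c * (x ⊓ x₀) := by
        rw [mul_inf_of_nonneg hfalg hc]
        exact le_inf (hy x hx) (hy x₀ hx₀)
      have hmxx : m ≤ x ⊓ x₀ := le_inf (hglb.1 hx) hmx₀
      have hz : 0 ≤ x ⊓ x₀ - m := sub_nonneg.2 hmxx
      have hzz : x ⊓ x₀ - m ≤ x₀ - m := sub_le_sub_right inf_le_right m
      have hsplit : c = c ⊓ ((n:ℝ)•(1:A)) + (c - (n:ℝ)•(1:A))⁺ := by
        rw [posPart_eq_sub_inf']; ring
      have h2a : (c ⊓ ((n:ℝ)•(1:A))) * (x ⊓ x₀ - m) ≤ ((n:ℝ)•(1:A)) * (x ⊓ x₀ - m) := by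
        have := hmulpos _ _ (sub_nonneg.2 (inf_le_right :
          c ⊓ ((n:ℝ)•(1:A)) ≤ (n:ℝ)•(1:A))) hz
        rw [sub_mul] at this
        exact sub_nonneg.1 this
      have h2b : (c - (n:ℝ)•(1:A))⁺ * (x ⊓ x₀ - m) ≤ K := by
        have := hmulpos _ _ (posPart_nonneg (c - (n:ℝ)•(1:A))) (sub_nonneg.2 hzz)
        rw [mul_sub] at this
        exact sub_nonneg.1 this
      have h2 : c * (x ⊓ x₀ - m) ≤ (n:ℝ)•(x ⊓ x₀ - m) + K := by
        calc c * (x ⊓ x₀ - m)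
            = (c ⊓ ((n:ℝ)•(1:A))) * (x ⊓ x₀ - m) + (c - (n:ℝ)•(1:A))⁺ * (x ⊓ x₀ - m) := by
              rw [← add_mul, ← hsplit]
          _ ≤ ((n:ℝ)•(1:A)) * (x ⊓ x₀ - m) + K := add_le_add h2a h2b
          _ = (n:ℝ)•(x ⊓ x₀ - m) + K := by rw [smul_mul_assoc, one_mul]
      have h3 : y - c*m ≤ (n:ℝ)•(x ⊓ x₀ - m) + K := by
        have e : c * (x ⊓ x₀ - m) = c * (x ⊓ x₀) - c * m := by ring
        calc y - c*m ≤ c * (x ⊓ x₀) - c*m := sub_le_sub_right h1 _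
          _ = c * (x ⊓ x₀ - m) := e.symm
          _ ≤ _ := h2
      have h4 : ((n:ℝ)⁻¹)•(y - c*m - K) ≤ x ⊓ x₀ - m := by
        have h5 : y - c*m - K ≤ (n:ℝ)•(x ⊓ x₀ - m) := by
          have := sub_le_sub_right h3 K
          simpa using this
        calc ((n:ℝ)⁻¹)•(y - c*m - K) ≤ ((n:ℝ)⁻¹)•((n:ℝ)•(x ⊓ x₀ - m)) :=
              smul_le_smul_of_nonneg_left h5 (by positivity)
          _ = x ⊓ x₀ - m := by rw [smul_smul, inv_mul_cancel₀ (ne_of_gt hnR), one_smul]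
      calc m + ((n:ℝ)⁻¹)•(y - c*m - K) ≤ m + (x ⊓ x₀ - m) := add_le_add le_rfl h4
        _ = x ⊓ x₀ := by ring
        _ ≤ x := inf_le_left
    have h6 : m + ((n:ℝ)⁻¹)•(y - c*m - K) ≤ m := hglb.2 hlb
    have h7 : ((n:ℝ)⁻¹)•(y - c*m - K) ≤ 0 := by
      have := sub_le_sub_right h6 m
      simpa using this
    have h8 : y - c*m - K ≤ 0 := by
      have h9 := smul_le_smul_of_nonneg_left h7 (le_of_lt hnR)
      rw [smul_smul, mul_inv_cancel₀ (ne_of_gt hnR), one_smul, smul_zero] at h9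
      exact h9
    have h8' : y - c*m ≤ K := by
      have := add_le_add_right h8 K
      simpa using this
    exact h8'
  -- archimedean finish
  have fin : ∀ n : ℕ, (n:ℝ) • (y - c*m) ≤ (c*c) * (x₀ - m) := by
    intro n
    rcases Nat.eq_zero_or_pos n with h | h
    · subst h
      simpa using hmulpos _ _ (hmulpos c c hc hc) hz₀0
    · have h9 := key n h
      have h10 : (n:ℝ)•(c - (n:ℝ)•(1:A))⁺ ≤ c*c := by
        set w := c - (n:ℝ)•(1:A) with hw
        have hpn : w⁺ * w⁻ = 0 := pp_mul_np_zero hfalg w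
        have e1 : w * w⁺ = w⁺ * w⁺ - w⁻ * w⁺ := by
          calc w * w⁺ = (w⁺ - w⁻) * w⁺ := by rw [posPart_sub_negPart]
            _ = w⁺ * w⁺ - w⁻ * w⁺ := by ring
        have e1' : w * w⁺ = w⁺ * w⁺ := by
          rw [e1, mul_comm w⁻ w⁺, hpn]; ring
        have e2 : 0 ≤ w * w⁺ := by rw [e1']; exact sq_nonneg' hmulpos hfalg _
        have e3 : (n:ℝ)•w⁺ ≤ c * w⁺ := by
          have e4 : c * w⁺ - (n:ℝ)•w⁺ = w * w⁺ := by
            rw [hw, sub_mul, smul_mul_assoc, one_mul]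
          rw [← sub_nonneg, e4]; exact e2
        have e5 : c * w⁺ ≤ c * c := by
          have h11 : 0 ≤ c ⊓ ((n:ℝ)•(1:A)) :=
            le_inf hc (smul_nonneg n.cast_nonneg (one_nonneg' hmulpos hfalg))
          have h12 : c - w⁺ = c ⊓ ((n:ℝ)•(1:A)) := by
            rw [hw, posPart_eq_sub_inf']; ring
          have h13 := hmulpos c _ hc (h12 ▸ h11)
          rw [mul_sub] at h13
          exact sub_nonneg.1 h13
        exact e3.trans e5
      calc (n:ℝ)•(y - c*m) ≤ (n:ℝ)•((c - (n:ℝ)•(1:A))⁺ * (x₀ - m)) :=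
            smul_le_smul_of_nonneg_left h9 n.cast_nonneg
        _ = ((n:ℝ)•(c - (n:ℝ)•(1:A))⁺) * (x₀ - m) := by rw [smul_mul_assoc]
        _ ≤ (c*c) * (x₀ - m) := by
            have := hmulpos _ _ (sub_nonneg.2 h10) hz₀0
            rw [sub_mul] at this
            exact sub_nonneg.1 this
  have := harch (y - c*m) ((c*c) * (x₀ - m)) fin
  exact sub_nonpos.1 this


/-- transfer of pointwise nonnegativity of quadratics on `[0,∞)` -/
theorem tq
    (hmulpos : ∀ a b : A, 0 ≤ a → 0 ≤ b → 0 ≤ a * b)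
    (hfalg : ∀ a b c : A, a ⊓ b = 0 → 0 ≤ c → (c * a) ⊓ b = 0) {a : A} (ha : 0 ≤ a) {c2 c1 c0 : ℝ}
    (h : ∀ u : ℝ, 0 ≤ u → 0 ≤ c2*u^2 + c1*u + c0) :
    0 ≤ c2 • (a*a) + c1 • a + c0 • (1:A) := by
  have hc0 : 0 ≤ c0 := by simpa using h 0 le_rfl
  have hc2 : 0 ≤ c2 := by
    by_contra hneg
    push_neg at hneg
    have hMpos : 0 < |c1| + |c0| + 1 := by positivity
    have hdivnn : 0 ≤ (|c1| + |c0| + 1) / (-c2) := div_nonneg hMpos.le (by linarith)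
    have hU1 : 1 ≤ (|c1| + |c0| + 1) / (-c2) + 1 := by linarith
    have hU0 : 0 ≤ (|c1| + |c0| + 1) / (-c2) + 1 := by linarith
    have e : c2 * ((|c1| + |c0| + 1) / (-c2)) = -(|c1| + |c0| + 1) := by
      rw [(mul_div_assoc c2 (|c1| + |c0| + 1) (-c2)).symm,
        div_eq_iff (show (-c2) ≠ 0 by linarith)]
      ring
    have h0 := h ((|c1| + |c0| + 1) / (-c2) + 1) hU0
    have b1 : c1 * ((|c1| + |c0| + 1) / (-c2) + 1) ≤ |c1| * ((|c1| + |c0| + 1) / (-c2) + 1) :=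
      mul_le_mul_of_nonneg_right (le_abs_self c1) hU0
    have b2 : c0 ≤ |c0| := le_abs_self c0
    nlinarith [abs_nonneg c0, abs_nonneg c1]
  by_cases hc1 : 0 ≤ c1
  · refine add_nonneg (add_nonneg ?_ ?_) ?_
    · exact smul_nonneg hc2 (sq_nonneg' hmulpos hfalg a)
    · exact smul_nonneg hc1 ha
    · exact smul_nonneg hc0 (one_nonneg' hmulpos hfalg)
  · push_neg at hc1
    have hc2pos : 0 < c2 := by
      rcases hc2.lt_or_eq with h' | h'
      · exact h'
      · exfalso
        have hu : (0:ℝ) ≤ (c0+1)/(-c1) := div_nonneg (by linarith) (by linarith)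
        have h0 := h ((c0+1)/(-c1)) hu
        rw [← h'] at h0
        have e : c1 * ((c0+1)/(-c1)) = -(c0+1) := by
          rw [(mul_div_assoc c1 (c0+1) (-c1)).symm,
            div_eq_iff (show (-c1) ≠ 0 by linarith)]
          ring
        nlinarith
    have hc0pos : 0 < c0 := by
      rcases hc0.lt_or_eq with h' | h'
      · exact h'
      · exfalso
        have hu : (0:ℝ) ≤ (-c1)/(2*c2) := div_nonneg (by linarith) (by linarith)
        have h0 := h ((-c1)/(2*c2)) hu
        rw [← h'] at h0
        have e : c2 * ((-c1)/(2*c2))^2 + c1 * ((-c1)/(2*c2)) + 0 = -(c1^2)/(4*c2) := by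
          have hne : c2 ≠ 0 := ne_of_gt hc2pos
          field_simp
          ring
        rw [e] at h0
        have hc1sq : 0 < c1^2 := by nlinarith
        have : 0 < c1^2 / (4*c2) := div_pos hc1sq (by linarith)
        have hne : -c1^2/(4*c2) = -(c1^2/(4*c2)) := by ring
        rw [hne] at h0
        linarith
    set u₀ := Real.sqrt (c0/c2) with hu₀def
    have hdiv : 0 < c0/c2 := div_pos hc0pos hc2pos
    have hu₀ : 0 < u₀ := Real.sqrt_pos.2 hdiv
    have hsq : u₀^2 = c0/c2 := Real.sq_sqrt hdiv.le
    have h0 := h u₀ hu₀.le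
    have e : c2 * u₀^2 = c0 := by rw [hsq]; field_simp
    have hs : Real.sqrt (c2*c0) * u₀ = c0 := by
      rw [hu₀def, ← Real.sqrt_mul (by positivity)]
      have : c2 * c0 * (c0/c2) = c0^2 := by field_simp
      rw [this, Real.sqrt_sq hc0pos.le]
    have key : 0 ≤ c1 + 2*Real.sqrt (c2*c0) := by
      have h1 : 0 ≤ (c1 + 2*Real.sqrt (c2*c0)) * u₀ := by nlinarith
      nlinarith [hu₀, Real.sqrt_nonneg (c2*c0)]
    set s := Real.sqrt c2 with hsdef
    set r := Real.sqrt c0 with hrdef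
    have hss : s*s = c2 := Real.mul_self_sqrt hc2pos.le
    have hrr : r*r = c0 := Real.mul_self_sqrt hc0pos.le
    have hsr : s*r = Real.sqrt (c2*c0) := by
      rw [hsdef, hrdef, ← Real.sqrt_mul hc2pos.le]
    have expand : (s•a - r•(1:A)) * (s•a - r•(1:A)) + (c1 + 2*(s*r))•a
        = (s*s)•(a*a) + c1•a + (r*r)•(1:A) := by
      simp only [sub_mul, mul_sub, smul_mul_assoc, mul_smul_comm, smul_smul, mul_one, one_mul]
      module
    have pos1 : 0 ≤ (s•a - r•(1:A)) * (s•a - r•(1:A)) := sq_nonneg' hmulpos hfalg _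
    have pos2 : 0 ≤ (c1 + 2*(s*r))•a := smul_nonneg (by rw [hsr]; linarith) ha
    have := add_nonneg pos1 pos2
    rw [expand, hss, hrr] at this
    exact this


theorem arch_le
    (harch : ∀ f g : A, (∀ n : ℕ, (n : ℝ) • f ≤ g) → f ≤ 0) {X z G : A} (hG : 0 ≤ G)
    (h : ∀ n : ℕ, 0 < n → X ≤ z + ((n:ℝ)⁻¹) • G) : X ≤ z := by
  have : ∀ n : ℕ, (n:ℝ) • (X - z) ≤ G := by
    intro n
    rcases Nat.eq_zero_or_pos n with h' | h'
    · subst h'; simpa using hG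
    · have hnR : (0:ℝ) < (n:ℝ) := by exact_mod_cast h'
      have h1 : X - z ≤ ((n:ℝ)⁻¹)•G := by
        have := sub_le_sub_right (h n h') z
        simpa [add_comm] using this
      calc (n:ℝ) • (X - z) ≤ (n:ℝ) • (((n:ℝ)⁻¹)•G) :=
            smul_le_smul_of_nonneg_left h1 hnR.le
        _ = G := by rw [smul_smul, mul_inv_cancel₀ (ne_of_gt hnR), one_smul]
  have := harch (X - z) G this
  exact sub_nonpos.1 this


theorem rpow_mul_self {v e : ℝ} (hv : 0 < v) : v^e * v = v^(e+1) := by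
  have h := (Real.rpow_add hv e 1).symm
  rw [Real.rpow_one] at h
  exact h




/-- basic posPart facts -/
theorem hple' (a : A) (x : ℝ) : a - x•(1:A) ≤ (a - x•(1:A))⁺ := le_posPart _

theorem hmle' (a : A) (x : ℝ) : x•(1:A) - a ≤ (a - x•(1:A))⁻ := by
  rw [negPart_def, neg_sub]
  exact le_sup_left

theorem hmbd'
    (hmulpos : ∀ a b : A, 0 ≤ a → 0 ≤ b → 0 ≤ a * b)
    (hfalg : ∀ a b c : A, a ⊓ b = 0 → 0 ≤ c → (c * a) ⊓ b = 0) {a : A} (ha : 0 ≤ a) {x : ℝ} (hx : 0 ≤ x) : (a - x•(1:A))⁻ ≤ x•(1:A) := by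
  rw [negPart_def, neg_sub]
  exact sup_le (sub_le_self _ ha) (smul_nonneg hx (one_nonneg' hmulpos hfalg))

/-- left-cell certificate -/
theorem leftCell
    (hmulpos : ∀ a b : A, 0 ≤ a → 0 ≤ b → 0 ≤ a * b)
    (hfalg : ∀ a b c : A, a ⊓ b = 0 → 0 ≤ c → (c * a) ⊓ b = 0) {a : A} (ha : 0 ≤ a) (L c1 c0 v β : ℝ)
    (hL : 0 ≤ L) (hβ : 0 ≤ β) (hslope : L*v + c1 ≤ β) (hconst : c0 + v*β ≤ 0) :
    ∃ W : A, 0 ≤ W ∧ L•(a*a) + c1•a + c0•(1:A) ≤ (a - v•(1:A))⁺ * W := by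
  have hone := one_nonneg' hmulpos hfalg
  refine ⟨L•a + β•(1:A), add_nonneg (smul_nonneg hL ha) (smul_nonneg hβ hone), ?_⟩
  have hid : (a - v•(1:A)) * (L•a + β•(1:A)) - (L•(a*a) + c1•a + c0•(1:A))
      = (β - (L*v + c1))•a + (-(v*β) - c0)•(1:A) := by
    simp only [mul_add, add_mul, sub_mul, mul_sub, smul_mul_assoc, mul_smul_comm,
      smul_smul, mul_one, one_mul]
    module
  have hpos : 0 ≤ (β - (L*v + c1))•a + (-(v*β) - c0)•(1:A) :=
    add_nonneg (smul_nonneg (by linarith) ha) (smul_nonneg (by linarith) hone)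
  rw [← hid] at hpos
  have h1 : L•(a*a) + c1•a + c0•(1:A) ≤ (a - v•(1:A)) * (L•a + β•(1:A)) :=
    sub_nonneg.1 hpos
  have h2 : (a - v•(1:A)) * (L•a + β•(1:A)) ≤ (a - v•(1:A))⁺ * (L•a + β•(1:A)) := by
    have h3 := hmulpos _ _ (sub_nonneg.2 (hple' a v))
      (add_nonneg (smul_nonneg hL ha) (smul_nonneg hβ hone))
    rw [sub_mul] at h3
    exact sub_nonneg.1 h3
  exact h1.trans h2

theorem chordId (a : A) (L Mc Cc lam mu : ℝ) (hne : mu ≠ lam) :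
    L•(a*a) + Mc•a + Cc•(1:A)
      = ((-(L*lam^2 + Mc*lam + Cc))/(mu-lam)) • (a - mu•(1:A))
      + ((-(L*mu^2 + Mc*mu + Cc))/(mu-lam)) • (lam•(1:A) - a)
      + L • ((a - lam•(1:A))*(a - mu•(1:A))) := by
  have h : mu - lam ≠ 0 := sub_ne_zero.2 hne
  simp only [mul_add, add_mul, sub_mul, mul_sub, smul_sub, smul_mul_assoc, mul_smul_comm,
    smul_smul, mul_one, one_mul]
  match_scalars <;> (field_simp; try ring)

/-- middle-cell certificate -/
theorem cellCore
    (hmulpos : ∀ a b : A, 0 ≤ a → 0 ≤ b → 0 ≤ a * b)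
    (hfalg : ∀ a b c : A, a ⊓ b = 0 → 0 ≤ c → (c * a) ⊓ b = 0) {a : A} (ha : 0 ≤ a) (L Mc Cc lam mu : ℝ)
    (hL : 0 ≤ L) (hlam : 0 ≤ lam) (hlm : lam < mu)
    (hdl : L*lam^2 + Mc*lam + Cc ≤ 0) (hdm : L*mu^2 + Mc*mu + Cc ≤ 0) :
    ∃ Aa Bb : A, 0 ≤ Aa ∧ 0 ≤ Bb ∧
      L•(a*a) + Mc•a + Cc•(1:A) ≤ (a - lam•(1:A))⁻ * Aa + (a - mu•(1:A))⁺ * Bb := by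
  have hone := one_nonneg' hmulpos hfalg
  have hmului : (0:ℝ) < mu - lam := by linarith
  have hmu0 : (0:ℝ) ≤ mu := by linarith
  have hdl' : (0:ℝ) ≤ -(L*lam^2 + Mc*lam + Cc) := by linarith
  have hdm' : (0:ℝ) ≤ -(L*mu^2 + Mc*mu + Cc) := by linarith
  refine ⟨((-(L*mu^2 + Mc*mu + Cc))/(mu-lam) + L*mu) • (1:A),
    ((-(L*lam^2 + Mc*lam + Cc))/(mu-lam)) • (1:A) + L • (a - lam•(1:A))⁺,
    smul_nonneg (add_nonneg (div_nonneg hdm' hmului.le) (mul_nonneg hL hmu0)) hone,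
    add_nonneg (smul_nonneg (div_nonneg hdl' hmului.le) hone)
      (smul_nonneg hL (posPart_nonneg _)), ?_⟩
  rw [chordId a L Mc Cc lam mu (ne_of_gt hlm)]
  have hT₁ : ((-(L*lam^2 + Mc*lam + Cc))/(mu-lam)) • (a - mu•(1:A))
      ≤ ((-(L*lam^2 + Mc*lam + Cc))/(mu-lam)) • (a - mu•(1:A))⁺ :=
    smul_le_smul_of_nonneg_left (hple' a mu) (div_nonneg hdl' hmului.le)
  have hT₂ : ((-(L*mu^2 + Mc*mu + Cc))/(mu-lam)) • (lam•(1:A) - a)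
      ≤ ((-(L*mu^2 + Mc*mu + Cc))/(mu-lam)) • (a - lam•(1:A))⁻ :=
    smul_le_smul_of_nonneg_left (hmle' a lam) (div_nonneg hdm' hmului.le)
  have hprod : (a - lam•(1:A))*(a - mu•(1:A))
      ≤ (a - lam•(1:A))⁺ * (a - mu•(1:A))⁺ + mu • (a - lam•(1:A))⁻ := by
    have e3 : (a - lam•(1:A))*(a - mu•(1:A))
        = (a - lam•(1:A))⁺ * (a - mu•(1:A))⁺ + (a - lam•(1:A))⁻ * (a - mu•(1:A))⁻
          - ((a - lam•(1:A))⁺ * (a - mu•(1:A))⁻ + (a - lam•(1:A))⁻ * (a - mu•(1:A))⁺) := by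
      nth_rewrite 1 [← posPart_sub_negPart (a - lam•(1:A)), ← posPart_sub_negPart (a - mu•(1:A))]
      ring
    have h4 : 0 ≤ (a - lam•(1:A))⁺ * (a - mu•(1:A))⁻ + (a - lam•(1:A))⁻ * (a - mu•(1:A))⁺ :=
      add_nonneg (hmulpos _ _ (posPart_nonneg _) (negPart_nonneg _))
        (hmulpos _ _ (negPart_nonneg _) (posPart_nonneg _))
    have h5 : (a - lam•(1:A))⁻ * (a - mu•(1:A))⁻ ≤ mu • (a - lam•(1:A))⁻ := by
      have h6 : (a - mu•(1:A))⁻ ≤ mu•(1:A) := hmbd' hmulpos hfalg ha hmu0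
      have h7 := hmulpos _ _ (negPart_nonneg (a - lam•(1:A))) (sub_nonneg.2 h6)
      rw [mul_sub] at h7
      have h8 := sub_nonneg.1 h7
      calc (a - lam•(1:A))⁻ * (a - mu•(1:A))⁻ ≤ (a - lam•(1:A))⁻ * (mu•(1:A)) := h8
        _ = mu • (a - lam•(1:A))⁻ := by rw [mul_smul_comm, mul_one]
    calc (a - lam•(1:A))*(a - mu•(1:A))
        = _ - _ := e3
      _ ≤ (a - lam•(1:A))⁺ * (a - mu•(1:A))⁺ + (a - lam•(1:A))⁻ * (a - mu•(1:A))⁻ :=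
          sub_le_self _ h4
      _ ≤ _ := add_le_add le_rfl h5
  have hT₃ : L • ((a - lam•(1:A))*(a - mu•(1:A)))
      ≤ L•((a - lam•(1:A))⁺ * (a - mu•(1:A))⁺) + (L*mu)•(a - lam•(1:A))⁻ := by
    have h9 := smul_le_smul_of_nonneg_left hprod hL
    rw [smul_add] at h9
    calc L • ((a - lam•(1:A))*(a - mu•(1:A)))
        ≤ L•((a - lam•(1:A))⁺ * (a - mu•(1:A))⁺) + L•(mu • (a - lam•(1:A))⁻) := h9
      _ = L•((a - lam•(1:A))⁺ * (a - mu•(1:A))⁺) + (L*mu)•(a - lam•(1:A))⁻ := by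
          rw [smul_smul]
  have hsum := add_le_add (add_le_add hT₁ hT₂) hT₃
  refine hsum.trans (le_of_eq ?_)
  simp only [mul_add, mul_smul_comm, mul_one, smul_add, smul_smul]
  have hcomm : (a - mu•(1:A))⁺ * (a - lam•(1:A))⁺ = (a - lam•(1:A))⁺ * (a - mu•(1:A))⁺ :=
    mul_comm _ _
  rw [← hcomm]
  module

/-- right-cell certificate -/
theorem rightCell
    (hmulpos : ∀ a b : A, 0 ≤ a → 0 ≤ b → 0 ≤ a * b)
    (hfalg : ∀ a b c : A, a ⊓ b = 0 → 0 ≤ c → (c * a) ⊓ b = 0) {a : A} (ha : 0 ≤ a) (c1 c0 V : ℝ)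
    (hc1 : c1 ≤ 0) (hsum : c0 + V*c1 ≤ 0) :
    c1•a + c0•(1:A) ≤ (-c1) • (a - V•(1:A))⁻ := by
  have hone := one_nonneg' hmulpos hfalg
  have h8 : ((-c1) • (V•(1:A) - a)) - (c1 • a + c0 • (1:A))
      = (-(c0 + V*c1)) • (1:A) := by module
  have h9 : 0 ≤ (-(c0 + V*c1)) • (1:A) := smul_nonneg (by linarith) hone
  rw [← h8] at h9
  have h10 : c1•a + c0•(1:A) ≤ (-c1) • (V•(1:A) - a) := sub_nonneg.1 h9
  exact h10.trans (smul_le_smul_of_nonneg_left (hmle' a V) (by linarith))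


/-- The main "hard direction" lemma. -/
theorem hard
    (hmulpos : ∀ a b : A, 0 ≤ a → 0 ≤ b → 0 ≤ a * b)
    (hfalg : ∀ a b c : A, a ⊓ b = 0 → 0 ≤ c → (c * a) ⊓ b = 0)
    (harch : ∀ f g : A, (∀ n : ℕ, (n : ℝ) • f ≤ g) → f ≤ 0)
    {a : A} (ha : 0 ≤ a) {s t z₁ z₀ : ℝ}
    (hs : 0 < s) (hs1 : s < 1) (ht : 0 < t) (ht1 : t < 1) (hst : s + t ≤ 1)
    (hz1 : 0 < z₁) (hz0 : 0 ≤ z₀)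
    (hzp : ∀ u : ℝ, 0 ≤ u → u ^ (s+t) ≤ z₁ * u + z₀)
    (hVex : ∀ ε : ℝ, 0 < ε → ∃ V : ℝ, 1 ≤ V ∧ s*t*V^(s+t-2) ≤ ε ∧
      (s+t-2*(s*t))*V^(s+t-1) ≤ z₁ ∧ (1-s*t)*V^(s+t) ≤ z₁*V + z₀ + ε)
    {X : A}
    (hX : ∀ v : ℝ, 0 < v → X ≤ (s*t*v^(s+t-2)) • (a*a)
      + ((s+t-2*(s*t))*v^(s+t-1)) • a + ((1-s)*(1-t)*v^(s+t)) • (1:A)) :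
    X ≤ z₁ • a + z₀ • (1:A) := by
  have hone : (0:A) ≤ 1 := one_nonneg' hmulpos hfalg
  have hsq : 0 ≤ a*a := sq_nonneg' hmulpos hfalg a
  have hσ0 : 0 < s + t := by linarith
  have hstpos : 0 < s*t := mul_pos hs ht
  refine arch_le harch (add_nonneg hsq hone) ?_
  intro n hn
  have hε : (0:ℝ) < ((n:ℝ)⁻¹) := by positivity
  generalize hεdef : ((n:ℝ)⁻¹) = ε at hε ⊢
  clear hεdef hn n
  set Z : A := z₁ • a + z₀ • (1:A) + ε • (a*a + 1) with hZ
  show X ≤ Z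
  set Δ : A := (X - Z)⁺ with hΔdef
  suffices hΔ0 : Δ ≤ 0 by
    have h1 : X - Z ≤ Δ := le_posPart _
    exact sub_nonpos.1 (h1.trans hΔ0)
  have hΔle : ∀ Y : A, X - Z ≤ Y → 0 ≤ Y → Δ ≤ Y := by
    intro Y h1 h2
    rw [hΔdef, posPart_def]
    exact sup_le h1 h2
  -- the quadratic bound for X - Z in "dE" form
  have hXd : ∀ v : ℝ, 0 < v → X - Z ≤
      (s*t*v^(s+t-2)) • (a*a) + ((s+t-2*(s*t))*v^(s+t-1) - z₁) • a
        + ((1-s)*(1-t)*v^(s+t) - z₀ - ε) • (1:A) := by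
    intro v hv
    have h1 := hX v hv
    have h2 : ((s*t*v^(s+t-2)) • (a*a) + ((s+t-2*(s*t))*v^(s+t-1)) • a
        + ((1-s)*(1-t)*v^(s+t)) • (1:A)) - Z
        = ((s*t*v^(s+t-2)) • (a*a) + ((s+t-2*(s*t))*v^(s+t-1) - z₁) • a
        + ((1-s)*(1-t)*v^(s+t) - z₀ - ε) • (1:A)) - ε • (a*a) := by
      rw [hZ]; module
    calc X - Z ≤ (s*t*v^(s+t-2)) • (a*a) + ((s+t-2*(s*t))*v^(s+t-1)) • a
        + ((1-s)*(1-t)*v^(s+t)) • (1:A) - Z := sub_le_sub_right h1 Z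
      _ = _ - ε • (a*a) := h2
      _ ≤ _ := sub_le_self _ (smul_nonneg hε.le hsq)
  have hddself : ∀ v : ℝ, 0 < v →
      s*t*v^(s+t-2)*v^2 + ((s+t-2*(s*t))*v^(s+t-1) - z₁)*v
        + ((1-s)*(1-t)*v^(s+t) - z₀ - ε) ≤ -ε := by
    intro v hv
    have h1 := pv_sum (s := s) (t := t) hv
    have h2 := hzp v hv.le
    nlinarith [h1, h2]
  set C : ℝ → Prop := fun x => ∃ W : A, 0 ≤ W ∧ Δ ≤ (a - x•(1:A))⁺ * W with hC
  ---- LEFT CELL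
  set v₁ : ℝ := min (ε ^ (s+t)⁻¹) 1 with hv₁def
  have hv₁pos : 0 < v₁ := lt_min (Real.rpow_pos_of_pos hε _) one_pos
  have hv₁le1 : v₁ ≤ 1 := min_le_right _ _
  have hv₁ε : v₁ ^ (s+t) ≤ ε := by
    have h1 : v₁ ≤ ε ^ (s+t)⁻¹ := min_le_left _ _
    have h2 : v₁ ^ (s+t) ≤ (ε ^ (s+t)⁻¹) ^ (s+t) :=
      Real.rpow_le_rpow hv₁pos.le h1 hσ0.le
    rwa [← Real.rpow_mul hε.le, inv_mul_cancel₀ (ne_of_gt hσ0), Real.rpow_one] at h2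
  have hCv₁ : C v₁ := by
    have hL : (0:ℝ) ≤ s*t*v₁^(s+t-2) := by
      have := Real.rpow_pos_of_pos hv₁pos (s+t-2)
      positivity
    have hLv₁ : s*t*v₁^(s+t-2)*v₁ = s*t*v₁^(s+t-1) := by
      calc s*t*v₁^(s+t-2)*v₁ = s*t*(v₁^(s+t-2)*v₁) := by ring
        _ = s*t*(v₁^(s+t-2+1)) := by rw [rpow_mul_self hv₁pos]
        _ = s*t*v₁^(s+t-1) := by rw [show s+t-2+1 = s+t-1 by ring]
    have hβle : max (s*t*v₁^(s+t-2)*v₁ + ((s+t-2*(s*t))*v₁^(s+t-1) - z₁)) 0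
        ≤ (s+t-s*t)*v₁^(s+t-1) := by
      have h1 : s*t*v₁^(s+t-2)*v₁ + ((s+t-2*(s*t))*v₁^(s+t-1) - z₁)
          = (s+t-s*t)*v₁^(s+t-1) - z₁ := by
        rw [hLv₁]; ring
      have h2 : (0:ℝ) ≤ (s+t-s*t)*v₁^(s+t-1) := by
        have h3 : 0 < s+t-s*t := by nlinarith
        have := Real.rpow_pos_of_pos hv₁pos (s+t-1)
        positivity
      rw [h1]
      exact max_le (by linarith) h2
    have hii : ((1-s)*(1-t)*v₁^(s+t) - z₀ - ε)
        + v₁*(max (s*t*v₁^(s+t-2)*v₁ + ((s+t-2*(s*t))*v₁^(s+t-1) - z₁)) 0) ≤ 0 := by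
      have h1 : v₁*((s+t-s*t)*v₁^(s+t-1)) = (s+t-s*t)*v₁^(s+t) := by
        calc v₁*((s+t-s*t)*v₁^(s+t-1)) = (s+t-s*t)*(v₁^(s+t-1)*v₁) := by ring
          _ = (s+t-s*t)*v₁^(s+t-1+1) := by rw [rpow_mul_self hv₁pos]
          _ = (s+t-s*t)*v₁^(s+t) := by rw [show s+t-1+1 = s+t by ring]
      have h2 : v₁*(max (s*t*v₁^(s+t-2)*v₁ + ((s+t-2*(s*t))*v₁^(s+t-1) - z₁)) 0)
          ≤ (s+t-s*t)*v₁^(s+t) := by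
        rw [← h1]
        exact mul_le_mul_of_nonneg_left hβle hv₁pos.le
      nlinarith [hv₁ε, hz0]
    obtain ⟨W, hW0, hW⟩ := leftCell hmulpos hfalg ha (s*t*v₁^(s+t-2))
      ((s+t-2*(s*t))*v₁^(s+t-1) - z₁) ((1-s)*(1-t)*v₁^(s+t) - z₀ - ε) v₁
      (max (s*t*v₁^(s+t-2)*v₁ + ((s+t-2*(s*t))*v₁^(s+t-1) - z₁)) 0)
      hL (le_max_right _ _) (le_max_left _ _) hii
    exact ⟨W, hW0, hΔle _ ((hXd v₁ hv₁pos).trans hW)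
      (hmulpos _ _ (posPart_nonneg _) hW0)⟩
  ---- the far point V
  obtain ⟨V, hV1, hVb, hVc, hVd⟩ := hVex ε hε
  have hv₁V : v₁ ≤ V := hv₁le1.trans hV1
  have hVpos : 0 < V := lt_of_lt_of_le one_pos hV1
  ---- WINDOW lemma
  have windowLem : ∀ x₀ : ℝ, 0 < x₀ → ∃ δ : ℝ, 0 < δ ∧ ∀ u : ℝ, |u - x₀| ≤ δ →
      s*t*x₀^(s+t-2)*u^2 + ((s+t-2*(s*t))*x₀^(s+t-1) - z₁)*u
        + ((1-s)*(1-t)*x₀^(s+t) - z₀ - ε) ≤ 0 := by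
    intro x₀ hx₀
    have hcont : Continuous fun u : ℝ => s*t*x₀^(s+t-2)*u^2
        + ((s+t-2*(s*t))*x₀^(s+t-1) - z₁)*u + ((1-s)*(1-t)*x₀^(s+t) - z₀ - ε) := by
      fun_prop
    have hneg : s*t*x₀^(s+t-2)*x₀^2 + ((s+t-2*(s*t))*x₀^(s+t-1) - z₁)*x₀
        + ((1-s)*(1-t)*x₀^(s+t) - z₀ - ε) < 0 :=
      lt_of_le_of_lt (hddself x₀ hx₀) (by linarith)
    have hmem : {u : ℝ | s*t*x₀^(s+t-2)*u^2 + ((s+t-2*(s*t))*x₀^(s+t-1) - z₁)*u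
        + ((1-s)*(1-t)*x₀^(s+t) - z₀ - ε) < 0} ∈ nhds x₀ :=
      hcont.continuousAt.preimage_mem_nhds (Iio_mem_nhds hneg)
    obtain ⟨δ, hδ, hball⟩ := Metric.mem_nhds_iff.1 hmem
    refine ⟨δ/2, by linarith, ?_⟩
    intro u hu
    have h2 : u ∈ Metric.ball x₀ δ := by
      rw [Metric.mem_ball, Real.dist_eq]
      linarith [hu]
    exact le_of_lt (hball h2)
  ---- CELL STEP
  have cellStep : ∀ x₀ lam mu : ℝ, 0 < x₀ → 0 ≤ lam → lam < mu →
      (s*t*x₀^(s+t-2)*lam^2 + ((s+t-2*(s*t))*x₀^(s+t-1) - z₁)*lam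
        + ((1-s)*(1-t)*x₀^(s+t) - z₀ - ε) ≤ 0) →
      (s*t*x₀^(s+t-2)*mu^2 + ((s+t-2*(s*t))*x₀^(s+t-1) - z₁)*mu
        + ((1-s)*(1-t)*x₀^(s+t) - z₀ - ε) ≤ 0) →
      C lam → C mu := by
    intro x₀ lam mu hx₀ hlam0 hlm hdl hdm hClam
    obtain ⟨W, hW0, hΔW⟩ := hClam
    have hL : (0:ℝ) ≤ s*t*x₀^(s+t-2) := by
      have := Real.rpow_pos_of_pos hx₀ (s+t-2)
      positivity
    obtain ⟨Aa, Bb, hAa0, hBb0, hmain⟩ := cellCore hmulpos hfalg ha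
      (s*t*x₀^(s+t-2)) ((s+t-2*(s*t))*x₀^(s+t-1) - z₁) ((1-s)*(1-t)*x₀^(s+t) - z₀ - ε)
      lam mu hL hlam0 hlm hdl hdm
    have hΔ2 : Δ ≤ (a - lam•(1:A))⁻ * Aa + (a - mu•(1:A))⁺ * Bb := by
      refine hΔle _ ((hXd x₀ hx₀).trans hmain) ?_
      exact add_nonneg (hmulpos _ _ (negPart_nonneg _) hAa0)
        (hmulpos _ _ (posPart_nonneg _) hBb0)
    have hΔ3 : Δ ≤ ((a - lam•(1:A))⁺ * W) ⊓ ((a - lam•(1:A))⁻ * Aa + (a - mu•(1:A))⁺ * Bb) :=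
      le_inf hΔW hΔ2
    have hΔ4 : ((a - lam•(1:A))⁺ * W) ⊓ ((a - lam•(1:A))⁻ * Aa + (a - mu•(1:A))⁺ * Bb)
        ≤ ((a - lam•(1:A))⁺ * W) ⊓ ((a - lam•(1:A))⁻ * Aa)
          + ((a - lam•(1:A))⁺ * W) ⊓ ((a - mu•(1:A))⁺ * Bb) :=
      inf_add_le' (hmulpos _ _ (posPart_nonneg _) hW0)
        (hmulpos _ _ (negPart_nonneg _) hAa0)
        (hmulpos _ _ (posPart_nonneg _) hBb0)
    have hΔ5 : ((a - lam•(1:A))⁺ * W) ⊓ ((a - lam•(1:A))⁻ * Aa) = 0 := by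
      have h1 : (a - lam•(1:A))⁺ ⊓ (a - lam•(1:A))⁻ = 0 := posPart_inf_negPart_eq_zero _
      have h2 := disj_prod_zero hmulpos hfalg h1 hW0 hAa0
      rwa [mul_comm W _, mul_comm Aa _] at h2
    refine ⟨Bb, hBb0, ?_⟩
    calc Δ ≤ _ + _ := hΔ3.trans hΔ4
      _ = ((a - lam•(1:A))⁺ * W) ⊓ ((a - mu•(1:A))⁺ * Bb) := by rw [hΔ5, zero_add]
      _ ≤ (a - mu•(1:A))⁺ * Bb := inf_le_right
  ---- REAL INDUCTION up to V
  have hCV : C V := by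
    set T : Set ℝ := {x | x ∈ Set.Icc v₁ V ∧ C x} with hT
    have hTne : v₁ ∈ T := ⟨⟨le_refl _, hv₁V⟩, hCv₁⟩
    have hTne' : T.Nonempty := ⟨v₁, hTne⟩
    have hbdd : BddAbove T := ⟨V, fun x hx => hx.1.2⟩
    have hSS1 : v₁ ≤ sSup T := le_csSup hbdd hTne
    have hSS2 : sSup T ≤ V := csSup_le hTne' (fun x hx => hx.1.2)
    have hSSpos : 0 < sSup T := lt_of_lt_of_le hv₁pos hSS1
    obtain ⟨δ, hδ, hwin⟩ := windowLem (sSup T) hSSpos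
    have hCSS : C (sSup T) := by
      have h1 : sSup T - δ < sSup T := by linarith
      obtain ⟨x, hxT, hxgt⟩ := exists_lt_of_lt_csSup hTne' h1
      have hxle : x ≤ sSup T := le_csSup hbdd hxT
      rcases eq_or_lt_of_le hxle with heq | hlt
      · exact heq ▸ hxT.2
      · refine cellStep (sSup T) x (sSup T) hSSpos (le_trans hv₁pos.le hxT.1.1) hlt ?_ ?_ hxT.2
        · refine hwin x ?_
          rw [abs_of_nonpos (by linarith)]
          linarith
        · refine hwin (sSup T) ?_
          simp [hδ.le]
    rcases eq_or_lt_of_le hSS2 with heq | hlt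
    · exact heq ▸ hCSS
    · exfalso
      have hmuSS : sSup T < min V (sSup T + δ) := lt_min hlt (by linarith)
      have hmuT : min V (sSup T + δ) ∈ T := by
        refine ⟨⟨hSS1.trans hmuSS.le, min_le_left _ _⟩, ?_⟩
        refine cellStep (sSup T) (sSup T) (min V (sSup T + δ)) hSSpos hSSpos.le hmuSS ?_ ?_ hCSS
        · refine hwin (sSup T) ?_
          simp [hδ.le]
        · refine hwin (min V (sSup T + δ)) ?_
          rw [abs_of_nonneg (by linarith)]
          have h3 : min V (sSup T + δ) ≤ sSup T + δ := min_le_right _ _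
          linarith
      have := le_csSup hbdd hmuT
      linarith
  ---- RIGHT CERT at V
  have hΔV : Δ ≤ (-((s+t-2*(s*t))*V^(s+t-1) - z₁)) • (a - V•(1:A))⁻ := by
    have hcr1neg : (s+t-2*(s*t))*V^(s+t-1) - z₁ ≤ 0 := by linarith
    have hsum : ((1-s)*(1-t)*V^(s+t) - z₀ - ε) + V*((s+t-2*(s*t))*V^(s+t-1) - z₁) ≤ 0 := by
      have e1 : V^(s+t-1)*V = V^(s+t) := by
        rw [rpow_mul_self hVpos, show s+t-1+1 = s+t by ring]
      have h2 : ((1-s)*(1-t)*V^(s+t) - z₀ - ε) + V*((s+t-2*(s*t))*V^(s+t-1) - z₁)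
          = (1-s*t)*V^(s+t) - z₁*V - z₀ - ε := by
        calc ((1-s)*(1-t)*V^(s+t) - z₀ - ε) + V*((s+t-2*(s*t))*V^(s+t-1) - z₁)
            = (1-s)*(1-t)*V^(s+t) + (s+t-2*(s*t))*(V^(s+t-1)*V) - z₁*V - z₀ - ε := by ring
          _ = (1-s)*(1-t)*V^(s+t) + (s+t-2*(s*t))*V^(s+t) - z₁*V - z₀ - ε := by rw [e1]
          _ = (1-s*t)*V^(s+t) - z₁*V - z₀ - ε := by ring
      rw [h2]; linarith
    have h1 : X - Z ≤ (s*t*V^(s+t-2) - ε) • (a*a)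
        + ((s+t-2*(s*t))*V^(s+t-1) - z₁) • a + ((1-s)*(1-t)*V^(s+t) - z₀ - ε) • (1:A) := by
      have h2 := hX V hVpos
      have h3 : ((s*t*V^(s+t-2)) • (a*a) + ((s+t-2*(s*t))*V^(s+t-1)) • a
          + ((1-s)*(1-t)*V^(s+t)) • (1:A)) - Z
          = (s*t*V^(s+t-2) - ε) • (a*a) + ((s+t-2*(s*t))*V^(s+t-1) - z₁) • a
          + ((1-s)*(1-t)*V^(s+t) - z₀ - ε) • (1:A) := by
        rw [hZ]; module
      calc X - Z ≤ _ - Z := sub_le_sub_right h2 Z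
        _ = _ := h3
    have h4 : (s*t*V^(s+t-2) - ε) • (a*a)
        + ((s+t-2*(s*t))*V^(s+t-1) - z₁) • a + ((1-s)*(1-t)*V^(s+t) - z₀ - ε) • (1:A)
        ≤ ((s+t-2*(s*t))*V^(s+t-1) - z₁) • a + ((1-s)*(1-t)*V^(s+t) - z₀ - ε) • (1:A) := by
      have h5 : 0 ≤ (ε - s*t*V^(s+t-2)) • (a*a) := smul_nonneg (by linarith) hsq
      have h6 : (((s+t-2*(s*t))*V^(s+t-1) - z₁) • a + ((1-s)*(1-t)*V^(s+t) - z₀ - ε) • (1:A))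
          - ((s*t*V^(s+t-2) - ε) • (a*a) + ((s+t-2*(s*t))*V^(s+t-1) - z₁) • a
            + ((1-s)*(1-t)*V^(s+t) - z₀ - ε) • (1:A))
          = (ε - s*t*V^(s+t-2)) • (a*a) := by module
      rw [← h6] at h5
      exact sub_nonneg.1 h5
    have h7 := rightCell hmulpos hfalg ha ((s+t-2*(s*t))*V^(s+t-1) - z₁)
      ((1-s)*(1-t)*V^(s+t) - z₀ - ε) V hcr1neg hsum
    refine hΔle _ (h1.trans (h4.trans h7)) ?_
    exact smul_nonneg (by linarith) (negPart_nonneg _)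
  ---- FINISH
  obtain ⟨W, hW0, hΔW⟩ := hCV
  have hfin : Δ ≤ ((a - V•(1:A))⁺ * W)
      ⊓ ((a - V•(1:A))⁻ * ((-((s+t-2*(s*t))*V^(s+t-1) - z₁)) • (1:A))) := by
    refine le_inf hΔW ?_
    have he : (-((s+t-2*(s*t))*V^(s+t-1) - z₁)) • (a - V•(1:A))⁻
        = (a - V•(1:A))⁻ * ((-((s+t-2*(s*t))*V^(s+t-1) - z₁)) • (1:A)) := by
      rw [mul_smul_comm, mul_one]
    rw [← he]
    exact hΔV
  have hz : ((a - V•(1:A))⁺ * W)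
      ⊓ ((a - V•(1:A))⁻ * ((-((s+t-2*(s*t))*V^(s+t-1) - z₁)) • (1:A))) = 0 := by
    have h1 : (a - V•(1:A))⁺ ⊓ (a - V•(1:A))⁻ = 0 := posPart_inf_negPart_eq_zero _
    have h2 := disj_prod_zero hmulpos hfalg h1 hW0
      (smul_nonneg (show (0:ℝ) ≤ -((s+t-2*(s*t))*V^(s+t-1) - z₁) by linarith) hone)
    rwa [mul_comm W _, mul_comm ((-((s+t-2*(s*t))*V^(s+t-1) - z₁)) • (1:A)) _] at h2
  calc Δ ≤ _ := hfin
    _ = 0 := hz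


theorem prod_tangent_eq (a : A) (s t v : ℝ) (hv : 0 < v) :
    ((s*v^(s-1))•a + ((1-s)*v^s)•(1:A)) * ((t*v^(t-1))•a + ((1-t)*v^t)•(1:A))
      = (s*t*v^(s+t-2))•(a*a) + ((s+t-2*(s*t))*v^(s+t-1))•a + ((1-s)*(1-t)*v^(s+t))•(1:A) := by
  rw [elt_mul_elt, diag_c2 hv, diag_c1 hv, diag_c0 hv]

theorem le_mul_glb
    (hmulpos : ∀ a b : A, 0 ≤ a → 0 ≤ b → 0 ≤ a * b)
    (hfalg : ∀ a b c : A, a ⊓ b = 0 → 0 ≤ c → (c * a) ⊓ b = 0)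
    (harch : ∀ f g : A, (∀ n : ℕ, (n : ℝ) • f ≤ g) → f ≤ 0)
    {a : A} (ha : 0 ≤ a) {s t : ℝ} (hs0 : 0 ≤ s) (hs1 : s ≤ 1) (ht0 : 0 ≤ t) (ht1 : t ≤ 1)
    {ms mt : A} (hms : IsGLB (gset a s) ms) (hmt : IsGLB (gset a t) mt)
    {Y : A} (hY : ∀ x ∈ gset a s, ∀ y ∈ gset a t, Y ≤ x*y) : Y ≤ ms*mt := by
  have hone := one_nonneg' hmulpos hfalg
  have h1 : ∀ x ∈ gset a s, Y ≤ x * mt := by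
    intro x hx
    exact glb_mul hmulpos hfalg harch hmt (gset_nonempty a t)
      (gset_mem_nonneg hone ha hs0 hs1 hx) (fun y hy => hY x hx y hy)
  have h2 : ∀ x ∈ gset a s, Y ≤ mt * x := by
    intro x hx; rw [mul_comm]; exact h1 x hx
  have h3 : Y ≤ mt * ms := glb_mul hmulpos hfalg harch hms (gset_nonempty a s)
    (glb_gset_nonneg hone ha ht0 ht1 hmt) h2
  rwa [mul_comm] at h3

theorem prod_glb_le
    (hmulpos : ∀ a b : A, 0 ≤ a → 0 ≤ b → 0 ≤ a * b)
    (hfalg : ∀ a b c : A, a ⊓ b = 0 → 0 ≤ c → (c * a) ⊓ b = 0)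
    {a : A} (ha : 0 ≤ a) {s t : ℝ}
    (hs : 0 < s) (hs1 : s < 1) (ht : 0 < t) (ht1 : t < 1)
    {ms mt : A} (hms : IsGLB (gset a s) ms) (hmt : IsGLB (gset a t) mt) :
    ∀ v : ℝ, 0 < v → ms*mt ≤ (s*t*v^(s+t-2))•(a*a) + ((s+t-2*(s*t))*v^(s+t-1))•a
      + ((1-s)*(1-t)*v^(s+t))•(1:A) := by
  intro v hv
  have hone := one_nonneg' hmulpos hfalg
  have h1 : ms ≤ (s*v^(s-1))•a + ((1-s)*v^s)•(1:A) := hms.1 (mem_gset_tangent a hv)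
  have h2 : mt ≤ (t*v^(t-1))•a + ((1-t)*v^t)•(1:A) := hmt.1 (mem_gset_tangent a hv)
  have h3 := mul_le_mul4 hmulpos (glb_gset_nonneg hone ha hs.le hs1.le hms)
    (glb_gset_nonneg hone ha ht.le ht1.le hmt) h1 h2
  rwa [prod_tangent_eq a s t v hv] at h3

theorem member_prod_pointwise {s t θ₁ θ₂ η₁ η₂ : ℝ}
    (hs : 0 < s) (hs1 : s ≤ 1) (ht : 0 < t) (ht1 : t ≤ 1)
    (h1 : 0 < θ₁) (h2 : 0 < θ₂) (h3 : 0 < η₁) (h4 : 0 < η₂)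
    (hcs : θ₁^s*θ₂^(1-s) = 1) (hct : η₁^t*η₂^(1-t) = 1) :
    ∀ u : ℝ, 0 ≤ u → u^(s+t) ≤ (s*θ₁*(t*η₁))*u^2
      + (s*θ₁*((1-t)*η₂) + (1-s)*θ₂*(t*η₁))*u + ((1-s)*θ₂*((1-t)*η₂)) := by
  intro u hu
  have l1 := tangent_line_ge hs hs1 h1 h2 hcs hu
  have l2 := tangent_line_ge ht ht1 h3 h4 hct hu
  have p1 : (0:ℝ) ≤ u^s := Real.rpow_nonneg hu _
  have p2 : (0:ℝ) ≤ u^t := Real.rpow_nonneg hu _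
  have hprod : u^s*u^t ≤ (s*θ₁*u + (1-s)*θ₂)*(t*η₁*u + (1-t)*η₂) :=
    mul_le_mul l1 l2 p2 (p1.trans l1)
  have he : u^s*u^t = u^(s+t) := by
    rcases eq_or_lt_of_le hu with h | h
    · rw [← h, Real.zero_rpow (by positivity : s+t ≠ 0), Real.zero_rpow (ne_of_gt hs), zero_mul]
    · rw [← Real.rpow_add h]
  calc u^(s+t) = u^s*u^t := he.symm
    _ ≤ (s*θ₁*u + (1-s)*θ₂)*(t*η₁*u + (1-t)*η₂) := hprod
    _ = (s*θ₁*(t*η₁))*u^2 + (s*θ₁*((1-t)*η₂) + (1-s)*θ₂*(t*η₁))*u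
        + ((1-s)*θ₂*((1-t)*η₂)) := by ring

theorem w_le_member_prod
    (hmulpos : ∀ a b : A, 0 ≤ a → 0 ≤ b → 0 ≤ a * b)
    (hfalg : ∀ a b c : A, a ⊓ b = 0 → 0 ≤ c → (c * a) ⊓ b = 0)
    {a : A} (ha : 0 ≤ a) {s t : ℝ}
    (hs : 0 < s) (hs1 : s < 1) (ht : 0 < t) (ht1 : t < 1) (hst1 : s+t < 1)
    {mw : A} (hmw : IsGLB (gset a (s+t)) mw)
    {x y : A} (hx : x ∈ gset a s) (hy : y ∈ gset a t) : mw ≤ x*y := by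
  obtain ⟨θ₁, θ₂, h1, h2, hcs, rfl⟩ := hx
  obtain ⟨η₁, η₂, h3, h4, hct, rfl⟩ := hy
  have hα : 0 < s*θ₁*(t*η₁) := by positivity
  have hβ : 0 < s*θ₁*((1-t)*η₂) + (1-s)*θ₂*(t*η₁) :=
    add_pos (mul_pos (mul_pos hs h1) (mul_pos (by linarith : (0:ℝ) < 1-t) h4))
      (mul_pos (mul_pos (by linarith : (0:ℝ) < 1-s) h2) (mul_pos ht h3))
  obtain ⟨c₀, hc₀pos, hc₀⟩ := exists_tangent hα hβ (show (0:ℝ) < s+t by linarith) hst1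
  have hr : mw ≤ ((s+t)*c₀^(s+t-1))•a + ((1-(s+t))*c₀^(s+t))•(1:A) :=
    hmw.1 (mem_gset_tangent a hc₀pos)
  have hval := member_prod_pointwise hs hs1.le ht ht1.le h1 h2 h3 h4 hcs hct c₀ hc₀pos.le
  have he : c₀^(s+t-1)*c₀ = c₀^(s+t) := by
    rw [rpow_mul_self hc₀pos, show s+t-1+1 = s+t by ring]
  have hGid : ∀ u : ℝ, (s*θ₁*(t*η₁))*u^2
      + ((s*θ₁*((1-t)*η₂) + (1-s)*θ₂*(t*η₁)) - (s+t)*c₀^(s+t-1))*u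
      + (((1-s)*θ₂*((1-t)*η₂)) - (1-(s+t))*c₀^(s+t))
      = (s*θ₁*(t*η₁))*(u-c₀)^2
        + ((s*θ₁*(t*η₁))*c₀^2 + (s*θ₁*((1-t)*η₂) + (1-s)*θ₂*(t*η₁))*c₀
          + ((1-s)*θ₂*((1-t)*η₂)) - c₀^(s+t)) := by
    intro u
    linear_combination (u - c₀)*hc₀ - (s+t)*he
  have hpt : ∀ u : ℝ, 0 ≤ u → 0 ≤ (s*θ₁*(t*η₁))*u^2
      + ((s*θ₁*((1-t)*η₂) + (1-s)*θ₂*(t*η₁)) - (s+t)*c₀^(s+t-1))*u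
      + (((1-s)*θ₂*((1-t)*η₂)) - (1-(s+t))*c₀^(s+t)) := by
    intro u hu
    rw [hGid u]
    have hA : 0 ≤ (s*θ₁*(t*η₁))*(u-c₀)^2 := mul_nonneg hα.le (sq_nonneg _)
    nlinarith [hval]
  have htq := tq hmulpos hfalg ha hpt
  have hid : (((s*θ₁)•a + ((1-s)*θ₂)•(1:A)) * ((t*η₁)•a + ((1-t)*η₂)•(1:A)))
      - (((s+t)*c₀^(s+t-1))•a + ((1-(s+t))*c₀^(s+t))•(1:A))
      = (s*θ₁*(t*η₁))•(a*a)
        + ((s*θ₁*((1-t)*η₂) + (1-s)*θ₂*(t*η₁)) - (s+t)*c₀^(s+t-1))•a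
        + (((1-s)*θ₂*((1-t)*η₂)) - (1-(s+t))*c₀^(s+t))•(1:A) := by
    rw [elt_mul_elt]; module
  rw [← hid] at htq
  exact hr.trans (sub_nonneg.1 htq)

theorem a_le_member_prod
    (hmulpos : ∀ a b : A, 0 ≤ a → 0 ≤ b → 0 ≤ a * b)
    (hfalg : ∀ a b c : A, a ⊓ b = 0 → 0 ≤ c → (c * a) ⊓ b = 0)
    {a : A} (ha : 0 ≤ a) {t : ℝ} (ht : 0 < t) (ht1 : t < 1)
    {x y : A} (hx : x ∈ gset a t) (hy : y ∈ gset a (1-t)) : a ≤ x*y := by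
  obtain ⟨θ₁, θ₂, h1, h2, hcs, rfl⟩ := hx
  obtain ⟨η₁, η₂, h3, h4, hct, rfl⟩ := hy
  have hpt : ∀ u : ℝ, 0 ≤ u → 0 ≤ (t*θ₁*((1-t)*η₁))*u^2
      + ((t*θ₁*((1-(1-t))*η₂) + (1-t)*θ₂*((1-t)*η₁)) - 1)*u
      + ((1-t)*θ₂*((1-(1-t))*η₂)) := by
    intro u hu
    have hv := member_prod_pointwise (s := t) (t := 1-t) ht ht1.le (by linarith)
      (by linarith) h1 h2 h3 h4 hcs hct u hu
    rw [show t+(1-t) = 1 by ring, Real.rpow_one] at hv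
    nlinarith [hv]
  have htq := tq hmulpos hfalg ha hpt
  have hid : (((t*θ₁)•a + ((1-t)*θ₂)•(1:A)) * (((1-t)*η₁)•a + ((1-(1-t))*η₂)•(1:A))) - a
      = (t*θ₁*((1-t)*η₁))•(a*a)
        + ((t*θ₁*((1-(1-t))*η₂) + (1-t)*θ₂*((1-t)*η₁)) - 1)•a
        + ((1-t)*θ₂*((1-(1-t))*η₂))•(1:A) := by
    rw [elt_mul_elt]; module
  rw [← hid] at htq
  exact sub_nonneg.1 htq

theorem complement
    (hmulpos : ∀ a b : A, 0 ≤ a → 0 ≤ b → 0 ≤ a * b)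
    (hfalg : ∀ a b c : A, a ⊓ b = 0 → 0 ≤ c → (c * a) ⊓ b = 0)
    (harch : ∀ f g : A, (∀ n : ℕ, (n : ℝ) • f ≤ g) → f ≤ 0)
    {a : A} (ha : 0 ≤ a) {t : ℝ} (ht : 0 < t) (ht1 : t < 1)
    {mt m1t : A} (hmt : IsGLB (gset a t) mt) (hm1t : IsGLB (gset a (1-t)) m1t) :
    mt * m1t = a := by
  apply le_antisymm
  · have h := hard hmulpos hfalg harch ha (s := t) (t := 1-t) (z₁ := 1) (z₀ := 0)
      ht ht1 (by linarith) (by linarith) (by linarith) one_pos le_rfl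
      (by
        intro u hu
        rw [show t+(1-t) = 1 by ring, Real.rpow_one]
        linarith)
      (Vcond_eq1 ht ht1 le_rfl)
      (prod_glb_le hmulpos hfalg ha ht ht1 (by linarith) (by linarith) hmt hm1t)
    simpa using h
  · exact le_mul_glb hmulpos hfalg harch ha ht.le ht1.le (by linarith) (by linarith) hmt hm1t
      (fun x hx y hy => a_le_member_prod hmulpos hfalg ha ht ht1 hx hy)

theorem coreb
    (hmulpos : ∀ a b : A, 0 ≤ a → 0 ≤ b → 0 ≤ a * b)
    (hfalg : ∀ a b c : A, a ⊓ b = 0 → 0 ≤ c → (c * a) ⊓ b = 0)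
    (harch : ∀ f g : A, (∀ n : ℕ, (n : ℝ) • f ≤ g) → f ≤ 0)
    {a : A} (ha : 0 ≤ a) {s t : ℝ}
    (hs : 0 < s) (hs1 : s < 1) (ht : 0 < t) (ht1 : t < 1) (hst1 : s+t < 1)
    {ms mt mst : A} (hms : IsGLB (gset a s) ms) (hmt : IsGLB (gset a t) mt)
    (hmst : IsGLB (gset a (s+t)) mst) : ms*mt = mst := by
  apply le_antisymm
  · refine hmst.2 ?_
    rintro z ⟨θ₁, θ₂, h1, h2, hcon, rfl⟩
    have hz1 : 0 < (s+t)*θ₁ := mul_pos (by linarith) h1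
    have hz0 : 0 ≤ (1-(s+t))*θ₂ := le_of_lt (mul_pos (by linarith) h2)
    exact hard hmulpos hfalg harch ha hs hs1 ht ht1 (by linarith) hz1 hz0
      (by
        intro u hu
        have h := tangent_line_ge (show (0:ℝ) < s+t by linarith) (by linarith) h1 h2 hcon hu
        calc u^(s+t) ≤ (s+t)*θ₁*u + (1-(s+t))*θ₂ := h
          _ = ((s+t)*θ₁)*u + (1-(s+t))*θ₂ := by ring)
      (Vcond_lt1 hs hs1 ht ht1 hst1 hz1 hz0)
      (prod_glb_le hmulpos hfalg ha hs hs1 ht ht1 hms hmt)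
  · exact le_mul_glb hmulpos hfalg harch ha hs.le hs1.le ht.le ht1.le hms hmt
      (fun x hx y hy => w_le_member_prod hmulpos hfalg ha hs hs1 ht ht1 hst1 hmst hx hy)

theorem exists_glb_gset
    (hmulpos : ∀ a b : A, 0 ≤ a → 0 ≤ b → 0 ≤ a * b)
    (hfalg : ∀ a b c : A, a ⊓ b = 0 → 0 ≤ c → (c * a) ⊓ b = 0)
    (hwgm : ∀ (n : ℕ) (f : Fin n → A) (r : Fin n → ℝ),
      (∀ k, 0 < r k ∧ r k < 1) → (∑ k, r k) = 1 →
      ∃ m, IsGLB {x | ∃ θ : Fin n → ℝ, (∀ k, 0 < θ k) ∧ (∏ k, θ k ^ r k) = 1 ∧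
        x = ∑ k, (r k * θ k) • |f k|} m)
    {a : A} (ha : 0 ≤ a) {ρ : ℝ} (hρ : 0 < ρ) (hρ1 : ρ < 1) :
    ∃ m, IsGLB (gset a ρ) m := by
  have hone := one_nonneg' hmulpos hfalg
  obtain ⟨m, hm⟩ := hwgm 2 ![a, 1] ![ρ, 1-ρ]
    (by
      intro k
      fin_cases k <;> constructor <;> simp <;> linarith)
    (by simp [Fin.sum_univ_two])
  have hset : {x | ∃ θ : Fin 2 → ℝ, (∀ k, 0 < θ k) ∧ (∏ k, θ k ^ (![ρ, 1-ρ]) k) = 1 ∧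
      x = ∑ k, ((![ρ, 1-ρ]) k * θ k) • |(![a, (1:A)]) k|} = gset a ρ := by
    ext x
    constructor
    · rintro ⟨θ, hθ, hc, rfl⟩
      refine ⟨θ 0, θ 1, hθ 0, hθ 1, ?_, ?_⟩
      · simpa [Fin.prod_univ_two] using hc
      · simp [Fin.sum_univ_two, abs_of_nonneg ha, abs_of_nonneg hone]
    · rintro ⟨θ₁, θ₂, h1, h2, hc, rfl⟩
      refine ⟨![θ₁, θ₂], ?_, ?_, ?_⟩
      · intro k; fin_cases k <;> simpa
      · simpa [Fin.prod_univ_two] using hc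
      · simp [Fin.sum_univ_two, abs_of_nonneg ha, abs_of_nonneg hone]
  rw [hset] at hm
  exact ⟨m, hm⟩

end Main

end Stmt15Aux

/-- **Lemma 4.5(2).** In a weighted geometric mean closed Archimedean `Φ`-algebra `A`,
for `p, q ∈ (0,∞)` and `a ∈ A⁺` one has `a^p · a^q = a^{p+q}`. -/
theorem stmt15 {A : Type*} [CommRing A] [Lattice A]
    [CovariantClass A A (· + ·) (· ≤ ·)]
    [Algebra ℝ A] [PosSMulMono ℝ A]
    (harch : ∀ f g : A, (∀ n : ℕ, (n : ℝ) • f ≤ g) → f ≤ 0)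
    (hmulpos : ∀ a b : A, 0 ≤ a → 0 ≤ b → 0 ≤ a * b)
    (hfalg : ∀ a b c : A, a ⊓ b = 0 → 0 ≤ c → (c * a) ⊓ b = 0)
    (hwgm : ∀ (n : ℕ) (f : Fin n → A) (r : Fin n → ℝ),
      (∀ k, 0 < r k ∧ r k < 1) → (∑ k, r k) = 1 →
      ∃ m, IsGLB {x | ∃ θ : Fin n → ℝ, (∀ k, 0 < θ k) ∧ (∏ k, θ k ^ r k) = 1 ∧
        x = ∑ k, (r k * θ k) • |f k|} m)
    (p q : ℝ) (hp : 0 < p) (hq : 0 < q)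
    (a : A) (ha : 0 ≤ a)
    (b : A) (hb : IsRPow a p b)
    (c : A) (hc : IsRPow a q c)
    (d : A) (hd : IsRPow a (p + q) d) :
    b * c = d := by
  obtain ⟨mb, hmb, hbe⟩ := hb
  obtain ⟨mc, hmc, hce⟩ := hc
  obtain ⟨md, hmd, hde⟩ := hd
  rw [Stmt15Aux.rpowSet_eq_gset] at hmb hmc hmd
  subst hbe hce hde
  have hs0 : 0 ≤ p - (⌊p⌋₊:ℝ) := sub_nonneg.2 (Nat.floor_le hp.le)
  have hs1 : p - (⌊p⌋₊:ℝ) < 1 := by have := Nat.lt_floor_add_one p; linarith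
  have ht0 : 0 ≤ q - (⌊q⌋₊:ℝ) := sub_nonneg.2 (Nat.floor_le hq.le)
  have ht1 : q - (⌊q⌋₊:ℝ) < 1 := by have := Nat.lt_floor_add_one q; linarith
  rcases eq_or_lt_of_le hs0 with hseq | hspos
  · -- fractional part of p is zero
    have hmb1 : mb = 1 := by
      have h : IsGLB (Stmt15Aux.gset a 0) mb := by rwa [← hseq] at hmb
      rw [Stmt15Aux.gset_zero] at h
      exact h.unique isGLB_singleton
    have hfl : ⌊p+q⌋₊ = ⌊q⌋₊ + ⌊p⌋₊ := by
      rw [show p+q = q + ((⌊p⌋₊:ℕ):ℝ) by push_cast; linarith, Nat.floor_add_natCast hq.le]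
    have hfrac : p + q - ((⌊p+q⌋₊:ℕ):ℝ) = q - (⌊q⌋₊:ℝ) := by
      rw [hfl]; push_cast; linarith
    have hmd' : IsGLB (Stmt15Aux.gset a (q - (⌊q⌋₊:ℝ))) md := by rwa [hfrac] at hmd
    have hmd1 : md = mc := hmd'.unique hmc
    rw [hmb1, hmd1, hfl]
    ring
  · rcases eq_or_lt_of_le ht0 with hteq | htpos
    · -- fractional part of q is zero
      have hmc1 : mc = 1 := by
        have h : IsGLB (Stmt15Aux.gset a 0) mc := by rwa [← hteq] at hmc
        rw [Stmt15Aux.gset_zero] at h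
        exact h.unique isGLB_singleton
      have hfl : ⌊p+q⌋₊ = ⌊p⌋₊ + ⌊q⌋₊ := by
        rw [show p+q = p + ((⌊q⌋₊:ℕ):ℝ) by push_cast; linarith, Nat.floor_add_natCast hp.le]
      have hfrac : p + q - ((⌊p+q⌋₊:ℕ):ℝ) = p - (⌊p⌋₊:ℝ) := by
        rw [hfl]; push_cast; linarith
      have hmd' : IsGLB (Stmt15Aux.gset a (p - (⌊p⌋₊:ℝ))) md := by rwa [hfrac] at hmd
      have hmd1 : md = mb := hmd'.unique hmb
      rw [hmc1, hmd1, hfl]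
      ring
    · -- both fractional parts positive
      rcases lt_or_ge ((p - (⌊p⌋₊:ℝ)) + (q - (⌊q⌋₊:ℝ))) 1 with hlt | hge
      · have hfl : ⌊p+q⌋₊ = ⌊p⌋₊ + ⌊q⌋₊ := by
          rw [Nat.floor_eq_iff (by positivity)]
          constructor
          · push_cast; linarith
          · push_cast; linarith
        have hfrac : p + q - ((⌊p+q⌋₊:ℕ):ℝ) = (p - (⌊p⌋₊:ℝ)) + (q - (⌊q⌋₊:ℝ)) := by
          rw [hfl]; push_cast; ring
        have hmd' : IsGLB (Stmt15Aux.gset a ((p - (⌊p⌋₊:ℝ)) + (q - (⌊q⌋₊:ℝ)))) md := by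
          rwa [hfrac] at hmd
        have hcore := Stmt15Aux.coreb hmulpos hfalg harch ha hspos hs1 htpos ht1 hlt
          hmb hmc hmd'
        rw [hfl]
        calc a^⌊p⌋₊ * mb * (a^⌊q⌋₊ * mc) = a^(⌊p⌋₊+⌊q⌋₊) * (mb*mc) := by
              rw [pow_add]; ring
          _ = a^(⌊p⌋₊+⌊q⌋₊) * md := by rw [hcore]
      · have hfl : ⌊p+q⌋₊ = ⌊p⌋₊ + ⌊q⌋₊ + 1 := by
          rw [Nat.floor_eq_iff (by positivity)]
          constructor
          · push_cast; linarith
          · push_cast; linarith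
        have hfrac : p + q - ((⌊p+q⌋₊:ℕ):ℝ)
            = (p - (⌊p⌋₊:ℝ)) + (q - (⌊q⌋₊:ℝ)) - 1 := by
          rw [hfl]; push_cast; ring
        have hmd' : IsGLB (Stmt15Aux.gset a ((p - (⌊p⌋₊:ℝ)) + (q - (⌊q⌋₊:ℝ)) - 1)) md := by
          rwa [hfrac] at hmd
        rcases eq_or_lt_of_le hge with heq1 | hgt1
        · -- fractional parts sum to 1
          have hmd1 : md = 1 := by
            have h : IsGLB (Stmt15Aux.gset a 0) md := by
              rwa [show (p - (⌊p⌋₊:ℝ)) + (q - (⌊q⌋₊:ℝ)) - 1 = 0 by linarith] at hmd'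
            rw [Stmt15Aux.gset_zero] at h
            exact h.unique isGLB_singleton
          have hm1t : IsGLB (Stmt15Aux.gset a (1 - (q - (⌊q⌋₊:ℝ)))) mb := by
            rwa [show 1 - (q - (⌊q⌋₊:ℝ)) = p - (⌊p⌋₊:ℝ) by linarith]
          have hcomp := Stmt15Aux.complement hmulpos hfalg harch ha htpos ht1 hmc hm1t
          rw [hfl, hmd1]
          calc a^⌊p⌋₊ * mb * (a^⌊q⌋₊ * mc) = a^(⌊p⌋₊+⌊q⌋₊) * (mc*mb) := by
                rw [pow_add]; ring
            _ = a^(⌊p⌋₊+⌊q⌋₊) * a := by rw [hcomp]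
            _ = a^(⌊p⌋₊+⌊q⌋₊+1) * 1 := by rw [pow_succ]; ring
        · -- fractional parts sum to more than 1
          obtain ⟨m1t, hm1t⟩ := Stmt15Aux.exists_glb_gset hmulpos hfalg hwgm ha
            (show (0:ℝ) < 1 - (q - (⌊q⌋₊:ℝ)) by linarith)
            (show (1:ℝ) - (q - (⌊q⌋₊:ℝ)) < 1 by linarith)
          have hb' : IsGLB (Stmt15Aux.gset a
              (((p - (⌊p⌋₊:ℝ)) + (q - (⌊q⌋₊:ℝ)) - 1) + (1 - (q - (⌊q⌋₊:ℝ))))) mb := by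
            rwa [show ((p - (⌊p⌋₊:ℝ)) + (q - (⌊q⌋₊:ℝ)) - 1) + (1 - (q - (⌊q⌋₊:ℝ)))
              = p - (⌊p⌋₊:ℝ) by ring]
          have hcore := Stmt15Aux.coreb hmulpos hfalg harch ha
            (show (0:ℝ) < (p - (⌊p⌋₊:ℝ)) + (q - (⌊q⌋₊:ℝ)) - 1 by linarith)
            (show (p - (⌊p⌋₊:ℝ)) + (q - (⌊q⌋₊:ℝ)) - 1 < 1 by linarith)
            (show (0:ℝ) < 1 - (q - (⌊q⌋₊:ℝ)) by linarith)
            (show (1:ℝ) - (q - (⌊q⌋₊:ℝ)) < 1 by linarith)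
            (show ((p - (⌊p⌋₊:ℝ)) + (q - (⌊q⌋₊:ℝ)) - 1) + (1 - (q - (⌊q⌋₊:ℝ))) < 1 by linarith)
            hmd' hm1t hb'
          have hcomp := Stmt15Aux.complement hmulpos hfalg harch ha htpos ht1 hmc hm1t
          rw [hfl]
          calc a^⌊p⌋₊ * mb * (a^⌊q⌋₊ * mc) = a^(⌊p⌋₊+⌊q⌋₊) * (mb*mc) := by
                rw [pow_add]; ring
            _ = a^(⌊p⌋₊+⌊q⌋₊) * ((md*m1t)*mc) := by rw [hcore]
            _ = a^(⌊p⌋₊+⌊q⌋₊) * (md*(mc*m1t)) := by ring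
            _ = a^(⌊p⌋₊+⌊q⌋₊) * (md*a) := by rw [hcomp]
            _ = a^(⌊p⌋₊+⌊q⌋₊+1) * md := by rw [pow_succ]; ring
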